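/- arXiv:2110.11301 — 5 statements merged into one kernel-verified Lean document; each statement's English description precedes it below -/
import Mathlib

section
/- For every M > 0 and every ε ∈ (0,1) there exists a positive integer m₀ = m₀(M,ε) such that for every m ≥ m₀ the following holds. Let X be a compact metric space, f : X → X a homeomorphism, and A : X → GL(d,ℝ) a continuous map with ‖A(x)‖ < M for every x ∈ X. Let y ∈ X (a nonperiodic point of f) and let v₀, w₀ ∈ ℝ^d be linearly independent unit vectors such that ‖A^m(y) v₀‖ < 2 ‖A^m(y) w₀‖. Then there exist invertible matrices L₀, …, L_{m−1} ∈ GL(d,ℝ) such that ‖A(f^j(y)) − L_j‖ < ε for every 0 ≤ j ≤ m−1 and the vector L_{m−1} ⋯ L₁ L₀ (v₀) belongs to the line span(A^m(y) w₀). -/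
set_option maxHeartbeats 2000000
set_option synthInstance.maxHeartbeats 400000


open Function

/-- Composition `L (n-1) ∘ ⋯ ∘ L 1 ∘ L 0` of the first `n` terms of a sequence of
continuous linear endomorphisms. -/
noncomputable def seqComp {E : Type*} [NormedAddCommGroup E] [NormedSpace ℝ E]
    (L : ℕ → (E →L[ℝ] E)) : ℕ → (E →L[ℝ] E)
  | 0 => ContinuousLinearMap.id ℝ E
  | n + 1 => (L n).comp (seqComp L n)

/-- The iterates `A^n(x) = A(f^{n-1} x) ⋯ A(f x) A(x)` of a linear cocycle. -/
noncomputable def cocycleIter {X : Type*} {E : Type*} [NormedAddCommGroup E] [NormedSpace ℝ E]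
    (f : X → X) (A : X → (E →L[ℝ] E)) (n : ℕ) (x : X) : E →L[ℝ] E :=
  seqComp (fun j => A (f^[j] x)) n

section helpers
variable {d : ℕ}
local notation "E" => EuclideanSpace ℝ (Fin d)

lemma exists_perturb (B : E ≃L[ℝ] E) (φ : E →L[ℝ] ℝ) (u : E)
    (h : 1 + φ (B.symm u) ≠ 0) :
    ∃ L : E ≃L[ℝ] E, (L : E →L[ℝ] E) = (B : E →L[ℝ] E) + φ.smulRight u := by
  set f : E →L[ℝ] E := (B : E →L[ℝ] E) + φ.smulRight u with hf
  have hinj : Function.Injective f := by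
    intro z z' hzz
    have hz : f (z - z') = 0 := by rw [map_sub, hzz, sub_self]
    set zz := z - z' with hzzdef
    have h1 : B zz + φ zz • u = 0 := by simpa [hf] using hz
    have h2 : zz = -(φ zz • B.symm u) := by
      have := congrArg B.symm h1
      simpa [map_add, eq_neg_iff_add_eq_zero] using this
    have h3 : φ zz * (1 + φ (B.symm u)) = 0 := by
      have := congrArg φ h2
      simp [map_smul, smul_eq_mul] at this
      ring_nf; ring_nf at this; nlinarith [this]
    have h4 : φ zz = 0 := by
      rcases mul_eq_zero.mp h3 with h' | h'
      · exact h'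
      · exact absurd h' h
    have h5 : zz = 0 := by rw [h2, h4, zero_smul, neg_zero]
    exact sub_eq_zero.mp h5
  have hbij : Function.Bijective f :=
    ⟨hinj, (LinearMap.injective_iff_surjective (f := (f : E →ₗ[ℝ] E))).mp hinj⟩
  let e : E ≃ₗ[ℝ] E := LinearEquiv.ofBijective (f : E →ₗ[ℝ] E) hbij
  refine ⟨e.toContinuousLinearEquiv, ?_⟩
  ext z
  simp [e, LinearEquiv.coe_toContinuousLinearEquiv', f]

lemma key_perturb (B : E ≃L[ℝ] E) (x u : E) (hx : x ≠ 0)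
    (hinv : ‖x‖ ^ 2 + (inner ℝ x (B.symm u) : ℝ) ≠ 0) :
    ∃ L : E ≃L[ℝ] E, (L : E →L[ℝ] E) x = B x + u ∧
      ‖(B : E →L[ℝ] E) - (L : E →L[ℝ] E)‖ ≤ ‖u‖ / ‖x‖ := by
  have hxn : ‖x‖ ≠ 0 := norm_ne_zero_iff.mpr hx
  set φ : E →L[ℝ] ℝ := (‖x‖ ^ 2)⁻¹ • (innerSL ℝ x) with hφ
  have hφapp : ∀ z : E, φ z = (inner ℝ x z : ℝ) / ‖x‖ ^ 2 := by
    intro z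
    simp [hφ, div_eq_inv_mul]
  have h1 : 1 + φ (B.symm u) ≠ 0 := by
    rw [hφapp]
    have heq : 1 + (inner ℝ x (B.symm u) : ℝ) / ‖x‖ ^ 2
        = (‖x‖ ^ 2 + (inner ℝ x (B.symm u) : ℝ)) / ‖x‖ ^ 2 := by
      field_simp
    rw [heq]
    exact div_ne_zero hinv (pow_ne_zero _ hxn)
  obtain ⟨L, hL⟩ := exists_perturb B φ u h1
  have hφx : φ x = 1 := by
    rw [hφapp, real_inner_self_eq_norm_sq]
    field_simp
  refine ⟨L, ?_, ?_⟩
  · rw [hL]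
    simp [hφx]
  · have hd : (B : E →L[ℝ] E) - (L : E →L[ℝ] E) = -(φ.smulRight u) := by
      rw [hL]; abel
    rw [hd, norm_neg, ContinuousLinearMap.norm_smulRight_apply]
    have hx0 : 0 < ‖x‖ := lt_of_le_of_ne (norm_nonneg x) (Ne.symm hxn)
    have hφn : ‖φ‖ ≤ ‖x‖⁻¹ := by
      apply ContinuousLinearMap.opNorm_le_bound _ (by positivity)
      intro z
      have hb := abs_real_inner_le_norm x z
      calc ‖φ z‖ = |(inner ℝ x z : ℝ)| / ‖x‖ ^ 2 := by
            rw [hφapp, Real.norm_eq_abs, abs_div,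
              abs_of_nonneg (show (0:ℝ) ≤ ‖x‖ ^ 2 by positivity)]
        _ ≤ (‖x‖ * ‖z‖) / ‖x‖ ^ 2 := by gcongr
        _ = ‖x‖⁻¹ * ‖z‖ := by rw [pow_two]; field_simp
    calc ‖φ‖ * ‖u‖ ≤ ‖x‖⁻¹ * ‖u‖ := mul_le_mul_of_nonneg_right hφn (norm_nonneg u)
      _ = ‖u‖ / ‖x‖ := by rw [div_eq_inv_mul]

lemma norm_shear_sq {F : Type*} [NormedAddCommGroup F] [InnerProductSpace ℝ F] (a b : F) (t : ℝ) :
    ‖a + t • b‖ ^ 2 = ‖a‖ ^ 2 + 2 * (t * (inner ℝ a b : ℝ)) + t ^ 2 * ‖b‖ ^ 2 := by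
  rw [norm_add_sq_real, real_inner_smul_right, norm_smul, Real.norm_eq_abs, mul_pow, sq_abs]

lemma inner_shear_right {F : Type*} [NormedAddCommGroup F] [InnerProductSpace ℝ F] (a b : F) (t : ℝ) :
    (inner ℝ (a + t • b) b : ℝ) = (inner ℝ a b : ℝ) + t * ‖b‖ ^ 2 := by
  rw [inner_add_left, real_inner_smul_left, real_inner_self_eq_norm_sq]

lemma inner_shear_left {F : Type*} [NormedAddCommGroup F] [InnerProductSpace ℝ F] (a b : F) (t : ℝ) :
    (inner ℝ (a + t • b) a : ℝ) = ‖a‖ ^ 2 + t * (inner ℝ a b : ℝ) := by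
  rw [inner_add_left, real_inner_smul_left, real_inner_self_eq_norm_sq, real_inner_comm]

lemma shear_lower {F : Type*} [NormedAddCommGroup F] [InnerProductSpace ℝ F]
    (a b : F) (t s : ℝ) (ht : 0 ≤ t) (hs : 0 ≤ s) (ha : a ≠ 0) (hb : b ≠ 0)
    (h : s ^ 2 * (‖a‖ ^ 2 * ‖b‖ ^ 2) ≤ ‖a‖ ^ 2 * ‖b‖ ^ 2 - (inner ℝ a b : ℝ) ^ 2) :
    s * ‖a‖ ≤ ‖a + t • b‖ ∧ s * (t * ‖b‖) ≤ ‖a + t • b‖ := by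
  have hna : 0 < ‖a‖ := norm_pos_iff.mpr ha
  have hnb : 0 < ‖b‖ := norm_pos_iff.mpr hb
  have hX : 0 ≤ ‖a + t • b‖ := norm_nonneg _
  have h1 := norm_shear_sq a b t
  have hgram : ‖a + t•b‖^2*‖b‖^2 - (inner ℝ (a + t•b) b : ℝ)^2
      = ‖a‖^2*‖b‖^2 - (inner ℝ a b : ℝ)^2 := by
    rw [h1, inner_shear_right]; ring
  have hgram2 : ‖a + t•b‖^2*‖a‖^2 - (inner ℝ (a + t•b) a : ℝ)^2
      = t^2*(‖a‖^2*‖b‖^2 - (inner ℝ a b : ℝ)^2) := by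
    rw [h1, inner_shear_left]; ring
  have hcs : (inner ℝ (a + t•b) b : ℝ)^2 ≤ ‖a + t•b‖^2 * ‖b‖^2 := by
    have h' := abs_real_inner_le_norm (a + t•b) b
    nlinarith [abs_nonneg (inner ℝ (a + t•b) b : ℝ), sq_abs (inner ℝ (a + t•b) b : ℝ)]
  have hcs2 : (inner ℝ (a + t•b) a : ℝ)^2 ≤ ‖a + t•b‖^2 * ‖a‖^2 := by
    have h' := abs_real_inner_le_norm (a + t•b) a
    nlinarith [abs_nonneg (inner ℝ (a + t•b) a : ℝ), sq_abs (inner ℝ (a + t•b) a : ℝ)]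
  constructor
  · have key1 : (s*‖a‖)^2 * ‖b‖^2 ≤ ‖a + t•b‖^2*‖b‖^2 := by nlinarith
    have key1' : (s*‖a‖)^2 ≤ ‖a + t•b‖^2 :=
      le_of_mul_le_mul_right (by linarith) (pow_pos hnb 2)
    have := Real.sqrt_le_sqrt key1'
    rwa [Real.sqrt_sq (by positivity), Real.sqrt_sq hX] at this
  · have key2 : (s*(t*‖b‖))^2 * ‖a‖^2 ≤ ‖a + t•b‖^2*‖a‖^2 := by
      nlinarith [mul_le_mul_of_nonneg_left h (sq_nonneg t)]
    have key2' : (s*(t*‖b‖))^2 ≤ ‖a + t•b‖^2 :=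
      le_of_mul_le_mul_right (by linarith) (pow_pos hna 2)
    have := Real.sqrt_le_sqrt key2'
    rwa [Real.sqrt_sq (by positivity), Real.sqrt_sq hX] at this

lemma seqComp_succ_apply {F : Type*} [NormedAddCommGroup F] [NormedSpace ℝ F]
    (L : ℕ → (F →L[ℝ] F)) (n : ℕ) (v : F) :
    seqComp L (n+1) v = L n (seqComp L n v) := rfl

lemma seqComp_eq_of {F : Type*} [NormedAddCommGroup F] [NormedSpace ℝ F]
    (L : ℕ → (F →L[ℝ] F)) (g : ℕ → F) (v : F) (m : ℕ) (h0 : g 0 = v)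
    (hstep : ∀ j < m, L j (g j) = g (j+1)) : seqComp L m v = g m := by
  induction m with
  | zero => simpa [seqComp] using h0.symm
  | succ n ih =>
    rw [seqComp_succ_apply, ih (fun j hj => hstep j (Nat.lt_succ_of_lt hj))]
    exact hstep n (Nat.lt_succ_self n)

lemma seqComp_ne_zero (Aeq : ℕ → (E ≃L[ℝ] E)) (n : ℕ) (z : E) (hz : z ≠ 0) :
    seqComp (fun j => (Aeq j : E →L[ℝ] E)) n z ≠ 0 := by
  induction n with
  | zero => simpa [seqComp] using hz
  | succ n ih =>
    rw [seqComp_succ_apply]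
    exact fun hcon => ih ((Aeq n).map_eq_zero_iff.mp hcon)

end helpers

section auxmain

theorem aux_interchange (N : ℝ) (hN1 : 1 ≤ N) (ε : ℝ) (hε0 : 0 < ε) (hε1 : ε < 1) :
    ∃ m₀ : ℕ, 0 < m₀ ∧ ∀ m : ℕ, m₀ ≤ m → ∀ d : ℕ,
      ∀ Aeq : ℕ → (EuclideanSpace ℝ (Fin d) ≃L[ℝ] EuclideanSpace ℝ (Fin d)),
      (∀ j, ‖(Aeq j : EuclideanSpace ℝ (Fin d) →L[ℝ] EuclideanSpace ℝ (Fin d))‖ < N) →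
      ∀ v₀ w₀ : EuclideanSpace ℝ (Fin d), ‖v₀‖ = 1 → ‖w₀‖ = 1 →
      ‖seqComp (fun j => (Aeq j : EuclideanSpace ℝ (Fin d) →L[ℝ] EuclideanSpace ℝ (Fin d))) m v₀‖
        < 2 * ‖seqComp (fun j => (Aeq j : EuclideanSpace ℝ (Fin d) →L[ℝ] EuclideanSpace ℝ (Fin d))) m w₀‖ →
      ∃ L : ℕ → (EuclideanSpace ℝ (Fin d) ≃L[ℝ] EuclideanSpace ℝ (Fin d)),
        (∀ j < m, ‖(Aeq j : EuclideanSpace ℝ (Fin d) →L[ℝ] EuclideanSpace ℝ (Fin d))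
            - (L j : EuclideanSpace ℝ (Fin d) →L[ℝ] EuclideanSpace ℝ (Fin d))‖ < ε) ∧
        seqComp (fun j => (L j : EuclideanSpace ℝ (Fin d) →L[ℝ] EuclideanSpace ℝ (Fin d))) m v₀
          ∈ Submodule.span ℝ
              {seqComp (fun j => (Aeq j : EuclideanSpace ℝ (Fin d) →L[ℝ] EuclideanSpace ℝ (Fin d))) m w₀} := by
  have hN0 : (0:ℝ) < N := lt_of_lt_of_le one_pos hN1
  -- constants
  set s : ℝ := ε / (4*N) with hs_def
  set q : ℝ := s * ε / (2*N) with hq_def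
  set t1 : ℝ := ε / (2*N) with ht1_def
  set Th : ℝ := 4*N / (s*ε) with hTh_def
  have hs0 : 0 < s := by rw [hs_def]; positivity
  have hs1 : s < 1 := by
    rw [hs_def, div_lt_one (by positivity)]; nlinarith
  have hq0 : 0 < q := by rw [hq_def]; positivity
  have hqs : q < s := by
    have h2 : q * (2*N) = s * ε := by rw [hq_def]; field_simp
    nlinarith [h2]
  have ht10 : 0 < t1 := by rw [ht1_def]; positivity
  have ht11 : t1 < 1 := by rw [ht1_def, div_lt_one (by positivity)]; nlinarith
  have hTh0 : 0 < Th := by rw [hTh_def]; positivity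
  obtain ⟨n, hn⟩ := pow_unbounded_of_one_lt (Th / t1) (by linarith : (1:ℝ) < 1 + q)
  refine ⟨n + 3, by omega, ?_⟩
  intro m hm d Aeq hA v₀ w₀ hv1 hw1 hyp
  set P : ℕ → (EuclideanSpace ℝ (Fin d) →L[ℝ] EuclideanSpace ℝ (Fin d)) :=
    seqComp (fun j => (Aeq j : EuclideanSpace ℝ (Fin d) →L[ℝ] EuclideanSpace ℝ (Fin d))) with hP
  have hv0 : v₀ ≠ 0 := by intro h; rw [h, norm_zero] at hv1; exact one_ne_zero hv1.symm
  have hw0 : w₀ ≠ 0 := by intro h; rw [h, norm_zero] at hw1; exact one_ne_zero hw1.symm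
  have hPsucc : ∀ i z, P (i+1) z = (Aeq i) (P i z) := fun i z => rfl
  have ha_ne : ∀ i, P i v₀ ≠ 0 := fun i => seqComp_ne_zero Aeq i v₀ hv0
  have hb_ne : ∀ i, P i w₀ ≠ 0 := fun i => seqComp_ne_zero Aeq i w₀ hw0
  have hbpos : ∀ i, 0 < ‖P i w₀‖ := fun i => norm_pos_iff.mpr (hb_ne i)
  have hapos : ∀ i, 0 < ‖P i v₀‖ := fun i => norm_pos_iff.mpr (ha_ne i)
  have hAle : ∀ i (z : EuclideanSpace ℝ (Fin d)), ‖(Aeq i) z‖ ≤ N * ‖z‖ := by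
    intro i z
    calc ‖(Aeq i) z‖ = ‖(Aeq i : EuclideanSpace ℝ (Fin d) →L[ℝ] EuclideanSpace ℝ (Fin d)) z‖ := rfl
      _ ≤ ‖(Aeq i : EuclideanSpace ℝ (Fin d) →L[ℝ] EuclideanSpace ℝ (Fin d))‖ * ‖z‖ :=
          ContinuousLinearMap.le_opNorm _ _
      _ ≤ N * ‖z‖ := mul_le_mul_of_nonneg_right (hA i).le (norm_nonneg _)
  -- reduce to constructing a path g
  suffices hmain : ∃ g : ℕ → EuclideanSpace ℝ (Fin d), g 0 = v₀ ∧ (∃ c : ℝ, g m = c • (P m w₀)) ∧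
      (∀ j, j < m → ∃ Le : (EuclideanSpace ℝ (Fin d) ≃L[ℝ] EuclideanSpace ℝ (Fin d)),
        ‖(Aeq j : EuclideanSpace ℝ (Fin d) →L[ℝ] EuclideanSpace ℝ (Fin d))
          - (Le : EuclideanSpace ℝ (Fin d) →L[ℝ] EuclideanSpace ℝ (Fin d))‖ < ε ∧
        (Le : EuclideanSpace ℝ (Fin d) →L[ℝ] EuclideanSpace ℝ (Fin d)) (g j) = g (j+1)) by
    obtain ⟨g, hg0, ⟨c, hgm⟩, hkey⟩ := hmain
    choose Le hLe1 hLe2 using hkey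
    refine ⟨fun j => if h : j < m then Le j h else Aeq j, ?_, ?_⟩
    · intro j hj
      simp only [dif_pos hj]
      exact hLe1 j hj
    · have heq : seqComp (fun j => ((if h : j < m then Le j h else Aeq j :
          EuclideanSpace ℝ (Fin d) ≃L[ℝ] EuclideanSpace ℝ (Fin d)) :
          EuclideanSpace ℝ (Fin d) →L[ℝ] EuclideanSpace ℝ (Fin d))) m v₀ = g m := by
        apply seqComp_eq_of _ g v₀ m hg0
        intro j hj
        simp only [dif_pos hj]
        exact hLe2 j hj
      rw [heq, hgm]
      exact Submodule.mem_span_singleton.mpr ⟨c, rfl⟩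
  -- case analysis
  by_cases hc : ∀ j, j < m → s^2 * (‖P j v₀‖^2 * ‖P j w₀‖^2)
      ≤ ‖P j v₀‖^2 * ‖P j w₀‖^2 - (inner ℝ (P j v₀) (P j w₀) : ℝ)^2
  · -- CASE 2 : all angles bounded below, gradual shear
    obtain ⟨k, rfl⟩ : ∃ k, m = k + 3 := ⟨m - 3, by omega⟩
    have hnk : n ≤ k := by omega
    have hqN : q * N = s * ε / 2 := by rw [hq_def]; field_simp
    have ht1N : t1 * N = ε / 2 := by rw [ht1_def]; field_simp
    set t : ℕ → ℝ := fun i => if i = 0 then 0 else t1 * (1+q)^(i-1) with ht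
    have ht0 : t 0 = 0 := by simp [ht]
    have htsucc : ∀ i, t (i+1) = t1 * (1+q)^i := by intro i; simp [ht]
    have htpos : ∀ i, 0 < t (i+1) := by intro i; rw [htsucc]; positivity
    have htnonneg : ∀ i, 0 ≤ t i := by
      intro i
      cases i with
      | zero => rw [ht0]
      | succ i => exact (htpos i).le
    have htstep : ∀ i, t (i+2) = (1+q) * t (i+1) := by
      intro i; rw [htsucc, htsucc, pow_succ]; ring
    set T := t (k+1) with hT_def
    have hT0 : 0 < T := htpos k
    have hTTh : Th < T := by
      have h1 : (1+q)^n ≤ (1+q)^k := pow_le_pow_right₀ (by linarith) hnk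
      have h2 : Th < (1+q)^k * t1 := (div_lt_iff₀ ht10).mp (lt_of_lt_of_le hn h1)
      rw [hT_def, htsucc]
      linarith
    set tbad : ℝ := -(inner ℝ (P (k+2) v₀) (P (k+2) w₀) : ℝ) / ‖P (k+2) w₀‖^2 with htbad
    set tl : ℝ := if T*(1+q) = tbad then T*(1+q/2) else T*(1+q) with htl
    have htlbad : tl ≠ tbad := by
      rw [htl]
      split_ifs with h
      · intro hcon
        rw [← hcon] at h
        linarith only [h, mul_pos hT0 hq0]
      · exact h
    have htlT : T ≤ tl := by
      rw [htl]; split_ifs <;> linarith only [(mul_pos hT0 hq0).le]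
    have htlq : tl - T ≤ q * T := by
      rw [htl]; split_ifs <;> linarith only [(mul_pos hT0 hq0).le]
    have htl0 : 0 < tl := lt_of_lt_of_le hT0 htlT
    set t' : ℕ → ℝ := fun i => if i = k+2 then tl else t i with ht'
    have ht'0 : t' 0 = 0 := by
      simp only [ht']
      rw [if_neg (by omega : ¬ (0:ℕ) = k+2)]
      exact ht0
    have ht'nonneg : ∀ i, 0 ≤ t' i := by
      intro i; simp only [ht']
      split_ifs
      · exact htl0.le
      · exact htnonneg i
    have ht'last : t' (k+2) = tl := by simp [ht']
    -- lower bounds from the angle assumption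
    have hlow : ∀ i, i < k+3 → s * ‖P i v₀‖ ≤ ‖P i v₀ + t' i • P i w₀‖
        ∧ s * (t' i * ‖P i w₀‖) ≤ ‖P i v₀ + t' i • P i w₀‖ := by
      intro i hi
      exact shear_lower _ _ _ _ (ht'nonneg i) hs0.le (ha_ne i) (hb_ne i) (hc i hi)
    have hxpos : ∀ i, i < k+3 → 0 < ‖P i v₀ + t' i • P i w₀‖ := by
      intro i hi
      have h1 : 0 < s * ‖P i v₀‖ := mul_pos hs0 (hapos i)
      exact lt_of_lt_of_le h1 (hlow i hi).1
    have hxne : ∀ i, i < k+3 → P i v₀ + t' i • P i w₀ ≠ 0 := by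
      intro i hi
      exact norm_pos_iff.mp (hxpos i hi)
    set g : ℕ → EuclideanSpace ℝ (Fin d) :=
      fun i => if i < k+3 then P i v₀ + t' i • P i w₀ else tl • P i w₀ with hg
    have hglt : ∀ i, i < k+3 → g i = P i v₀ + t' i • P i w₀ := by
      intro i hi; rw [hg]; simp only [if_pos hi]
    have hgm : g (k+3) = tl • P (k+3) w₀ := by
      rw [hg]; simp only [if_neg (lt_irrefl (k+3))]
    refine ⟨g, ?_, ⟨tl, hgm⟩, ?_⟩
    · rw [hglt 0 (by omega), ht'0, zero_smul, add_zero]; rfl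
    · intro i hi
      by_cases hik : i = k+2
      · -- SNAP step
        subst hik
        have hx3 : (k+2 : ℕ) < k+3 := by omega
        set ck : ℝ := inner ℝ (P (k+2) v₀) (P (k+2) w₀) with hck
        set nb2 := ‖P (k+2) w₀‖ with hnb2
        have hnb2pos : 0 < nb2 := hbpos (k+2)
        have hbadne : ck + tl * nb2^2 ≠ 0 := by
          have heq : ck + tl * nb2^2 = nb2^2 * (tl - tbad) := by
            rw [htbad]; field_simp; ring
          rw [heq]
          exact mul_ne_zero (by positivity) (sub_ne_zero.mpr htlbad)
        have hinv2 : ‖P (k+2) v₀ + t' (k+2) • P (k+2) w₀‖^2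
            + (inner ℝ (P (k+2) v₀ + t' (k+2) • P (k+2) w₀)
                ((Aeq (k+2)).symm (-((Aeq (k+2)) (P (k+2) v₀)))) : ℝ) ≠ 0 := by
          rw [map_neg, ContinuousLinearEquiv.symm_apply_apply, inner_neg_right, ht'last]
          rw [norm_shear_sq, inner_shear_left, ← hck, ← hnb2]
          intro hcon
          exact (mul_ne_zero htl0.ne' hbadne) (by linear_combination hcon)
        obtain ⟨Lk, hLkx, hLkn⟩ := key_perturb (Aeq (k+2))
          (P (k+2) v₀ + t' (k+2) • P (k+2) w₀)
          (-((Aeq (k+2)) (P (k+2) v₀))) (hxne (k+2) hx3) hinv2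
        refine ⟨Lk, ?_, ?_⟩
        · refine lt_of_le_of_lt hLkn ?_
          rw [div_lt_iff₀ (hxpos (k+2) hx3)]
          have h1 : ‖-((Aeq (k+2)) (P (k+2) v₀))‖ = ‖P (k+3) v₀‖ := by rw [norm_neg]; rfl
          have h2 : ‖P (k+3) v₀‖ < 2 * ‖P (k+3) w₀‖ := hyp
          have h3 : ‖P (k+3) w₀‖ ≤ N * nb2 := by
            have heq3 : P (k+3) w₀ = (Aeq (k+2)) (P (k+2) w₀) := rfl
            rw [heq3]
            exact hAle (k+2) _
          have h4 : s * (tl * nb2) ≤ ‖P (k+2) v₀ + t' (k+2) • P (k+2) w₀‖ := by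
            have h4' := (hlow (k+2) hx3).2
            conv_lhs at h4' => rw [ht'last]
            exact h4'
          have h5 : s * Th * nb2 < s * (tl * nb2) := by
            have h5' := mul_lt_mul_of_pos_left (lt_of_lt_of_le hTTh htlT)
              (mul_pos hs0 hnb2pos)
            linarith only [h5']
          have hkey : (ε/2) * (s * Th) = 2 * N := by
            rw [hTh_def]
            field_simp
            ring
          rw [h1]
          have h6 : ‖P (k+3) v₀‖ < 2 * N * nb2 := by linarith only [h2, h3]
          have h7 : 2 * N * nb2 = (ε/2) * (s * Th * nb2) := by rw [← hkey]; ring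
          have h8 : (ε/2) * (s * Th * nb2) < (ε/2) * ‖P (k+2) v₀ + t' (k+2) • P (k+2) w₀‖ :=
            mul_lt_mul_of_pos_left (lt_of_lt_of_le h5 h4) (by linarith only [hε0])
          have h9 : (ε/2) * ‖P (k+2) v₀ + t' (k+2) • P (k+2) w₀‖
              < ε * ‖P (k+2) v₀ + t' (k+2) • P (k+2) w₀‖ :=
            mul_lt_mul_of_pos_right (by linarith only [hε0]) (hxpos (k+2) hx3)
          linarith only [h6, h7, h8, h9]
        · rw [hglt (k+2) hx3, hgm, hLkx]
          rw [ht'last, map_add, map_smul]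
          have h1 : (Aeq (k+2)) (P (k+2) v₀) = P (k+3) v₀ := rfl
          have h2 : (Aeq (k+2)) (P (k+2) w₀) = P (k+3) w₀ := rfl
          rw [h1, h2]
          abel
      · -- SHEAR step
        have hik2 : i < k+2 := by omega
        have hik3 : i < k+3 := by omega
        have hik3' : i + 1 < k+3 := by omega
        set Δ : ℝ := t' (i+1) - t' i with hΔ
        have hΔfacts : 0 ≤ Δ ∧ Δ * ‖P i w₀‖ < ‖P i v₀ + t' i • P i w₀‖
            ∧ Δ * (N * ‖P i w₀‖) ≤ (ε/2) * ‖P i v₀ + t' i • P i w₀‖ := by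
          rcases Nat.eq_zero_or_pos i with h0 | hpos
          · subst h0
            have e1 : t' 1 = t1 := by
              simp only [ht']
              rw [if_neg (by omega : ¬ (1:ℕ) = k+2)]
              simpa using htsucc 0
            have eΔ : Δ = t1 := by rw [hΔ, e1, ht'0, sub_zero]
            have ex : P 0 v₀ + t' 0 • P 0 w₀ = v₀ := by
              rw [ht'0, zero_smul, add_zero]; rfl
            have eb : ‖P 0 w₀‖ = 1 := by
              have : P 0 w₀ = w₀ := rfl
              rw [this, hw1]
            rw [eΔ, ex, eb, hv1]
            refine ⟨ht10.le, by linarith only [ht11], by linarith only [ht1N]⟩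
          · have hine : i ≠ k+2 := by omega
            have e1 : t' i = t i := by simp only [ht']; rw [if_neg hine]
            have htipos : 0 < t' i := by
              rw [e1]
              obtain ⟨i0, rfl⟩ := Nat.exists_eq_succ_of_ne_zero (Nat.pos_iff_ne_zero.mp hpos)
              exact htpos i0
            have hΔle : Δ ≤ q * t' i ∧ 0 ≤ Δ := by
              by_cases hi1 : i + 1 = k + 2
              · have e2 : t' (i+1) = tl := by simp only [ht']; rw [if_pos hi1]
                have e3 : t i = T := by
                  rw [hT_def]
                  congr 1
                  omega
                rw [hΔ, e2, e1, e3]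
                exact ⟨htlq, by linarith [htlT]⟩
              · have e2 : t' (i+1) = t (i+1) := by simp only [ht']; rw [if_neg hi1]
                obtain ⟨i0, rfl⟩ := Nat.exists_eq_succ_of_ne_zero (Nat.pos_iff_ne_zero.mp hpos)
                have e3 : t (i0+1+1) = (1+q) * t (i0+1) := htstep i0
                rw [hΔ, e2, e1, e3]
                constructor
                · linarith only [mul_nonneg hq0.le (htpos i0).le]
                · linarith only [mul_nonneg hq0.le (htpos i0).le]
            have hblow : s * (t' i * ‖P i w₀‖) ≤ ‖P i v₀ + t' i • P i w₀‖ := (hlow i hik3).2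
            have hbp : 0 < ‖P i w₀‖ := hbpos i
            refine ⟨hΔle.2, ?_, ?_⟩
            · calc Δ * ‖P i w₀‖ ≤ (q * t' i) * ‖P i w₀‖ :=
                    mul_le_mul_of_nonneg_right hΔle.1 hbp.le
                _ = q * (t' i * ‖P i w₀‖) := by ring
                _ < s * (t' i * ‖P i w₀‖) :=
                    mul_lt_mul_of_pos_right hqs (mul_pos htipos hbp)
                _ ≤ ‖P i v₀ + t' i • P i w₀‖ := hblow
            · calc Δ * (N * ‖P i w₀‖) ≤ (q * t' i) * (N * ‖P i w₀‖) :=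
                    mul_le_mul_of_nonneg_right hΔle.1 (by positivity)
                _ = (ε/2) * (s * (t' i * ‖P i w₀‖)) := by
                    linear_combination (t' i * ‖P i w₀‖) * hqN
                _ ≤ (ε/2) * ‖P i v₀ + t' i • P i w₀‖ :=
                    mul_le_mul_of_nonneg_left hblow (by linarith only [hε0])
        obtain ⟨hΔ0, hub1, hub2⟩ := hΔfacts
        have hinv2 : ‖P i v₀ + t' i • P i w₀‖^2
            + (inner ℝ (P i v₀ + t' i • P i w₀)
                ((Aeq i).symm (Δ • ((Aeq i) (P i w₀)))) : ℝ) ≠ 0 := by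
          rw [map_smul, ContinuousLinearEquiv.symm_apply_apply, real_inner_smul_right]
          have hcau := abs_real_inner_le_norm (P i v₀ + t' i • P i w₀) (P i w₀)
          have hxp := hxpos i hik3
          have hneg := neg_abs_le (inner ℝ (P i v₀ + t' i • P i w₀) (P i w₀) : ℝ)
          intro hcon
          linarith only [hcon, mul_lt_mul_of_pos_right hub1 hxp,
            mul_le_mul_of_nonneg_left hneg hΔ0,
            mul_le_mul_of_nonneg_left hcau hΔ0]
        obtain ⟨Li, hLix, hLin⟩ := key_perturb (Aeq i)
          (P i v₀ + t' i • P i w₀) (Δ • ((Aeq i) (P i w₀))) (hxne i hik3) hinv2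
        refine ⟨Li, ?_, ?_⟩
        · refine lt_of_le_of_lt hLin ?_
          rw [div_lt_iff₀ (hxpos i hik3)]
          have h1 : ‖Δ • ((Aeq i) (P i w₀))‖ ≤ Δ * (N * ‖P i w₀‖) := by
            rw [norm_smul, Real.norm_eq_abs, abs_of_nonneg hΔ0]
            exact mul_le_mul_of_nonneg_left (hAle i _) hΔ0
          calc ‖Δ • ((Aeq i) (P i w₀))‖ ≤ Δ * (N * ‖P i w₀‖) := h1
            _ ≤ (ε/2) * ‖P i v₀ + t' i • P i w₀‖ := hub2
            _ < ε * ‖P i v₀ + t' i • P i w₀‖ :=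
                mul_lt_mul_of_pos_right (by linarith only [hε0]) (hxpos i hik3)
        · rw [hglt i hik3, hglt (i+1) hik3', hLix, map_add, map_smul]
          have h1 : (Aeq i) (P i v₀) = P (i+1) v₀ := rfl
          have h2 : (Aeq i) (P i w₀) = P (i+1) w₀ := rfl
          rw [h1, h2, add_assoc, ← add_smul]
          congr 1
          rw [hΔ]
          congr 1
          ring

  · -- CASE 1 : some angle is small, one-shot swap
    push_neg at hc
    obtain ⟨j, hj, hsmall⟩ := hc
    set aj := P j v₀ with haj
    set bj := P j w₀ with hbj
    set cc : ℝ := inner ℝ aj bj with hcc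
    have hna : 0 < ‖aj‖ := hapos j
    have hnb : 0 < ‖bj‖ := hbpos j
    have hcsq : (1 - s^2) * (‖aj‖^2 * ‖bj‖^2) < cc^2 := by nlinarith [hsmall]
    have hs2 : s^2 < 1 := by nlinarith
    have hcc2pos : 0 < cc^2 := by
      nlinarith [hcsq, mul_pos (pow_pos hna 2) (pow_pos hnb 2)]
    have hcc0 : cc ≠ 0 := by
      intro h
      rw [h] at hcc2pos
      simp at hcc2pos
    have hcauchy : |cc| ≤ ‖aj‖ * ‖bj‖ := abs_real_inner_le_norm aj bj
    set σ : ℝ := if 0 ≤ cc then 1 else -1 with hσ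
    have hσc : σ * cc = |cc| := by
      rw [hσ]
      split_ifs with h
      · rw [one_mul, abs_of_nonneg h]
      · rw [abs_of_neg (lt_of_not_ge h)]; ring
    have habs : (1 - s^2) * (‖aj‖ * ‖bj‖) < |cc| := by
      nlinarith [hcauchy, hcsq, abs_nonneg cc, sq_abs cc]
    set r : ℝ := σ * (‖aj‖ / ‖bj‖) with hr
    have hσsq : σ^2 = 1 := by
      rw [hσ]; split_ifs <;> norm_num
    have hrc : r * cc = |cc| * (‖aj‖ / ‖bj‖) := by
      rw [hr, ← hσc]; ring
    have hrcpos : 0 < r * cc := by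
      rw [hrc]
      have : 0 < |cc| := abs_pos.mpr hcc0
      positivity
    have hinv : ‖aj‖^2 + (inner ℝ aj ((Aeq j).symm ((Aeq j) (r • bj - aj))) : ℝ) ≠ 0 := by
      rw [ContinuousLinearEquiv.symm_apply_apply, inner_sub_right, real_inner_smul_right,
        real_inner_self_eq_norm_sq, ← hcc]
      intro hcon
      nlinarith [hrcpos]
    obtain ⟨Lj, hLjx, hLjn⟩ := key_perturb (Aeq j) aj ((Aeq j) (r • bj - aj)) (ha_ne j) hinv
    have hrcc : (1 - s^2) * ‖aj‖^2 < r * cc := by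
      rw [hrc]
      calc (1 - s^2) * ‖aj‖^2 = ((1 - s^2) * (‖aj‖ * ‖bj‖)) * (‖aj‖ / ‖bj‖) := by
            field_simp
        _ < |cc| * (‖aj‖ / ‖bj‖) := by
            apply mul_lt_mul_of_pos_right habs (by positivity)
    have hr2 : r^2 * ‖bj‖^2 = ‖aj‖^2 := by
      rw [hr, mul_pow, hσsq, one_mul, div_pow]
      field_simp
    have hsubnorm : ‖r • bj - aj‖ ≤ 2*s*‖aj‖ := by
      have hexp : ‖r • bj - aj‖^2 = r^2*‖bj‖^2 - 2*(r*cc) + ‖aj‖^2 := by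
        rw [norm_sub_sq_real, real_inner_smul_left, real_inner_comm aj bj, ← hcc, norm_smul,
          Real.norm_eq_abs, mul_pow, sq_abs]
      have hX2 : ‖r • bj - aj‖^2 ≤ (2*s*‖aj‖)^2 := by nlinarith [hexp, hr2, hrcc, hs1, hs0]
      have := Real.sqrt_le_sqrt hX2
      rwa [Real.sqrt_sq (norm_nonneg _), Real.sqrt_sq (by positivity)] at this
    have hnormLj : ‖(Aeq j : EuclideanSpace ℝ (Fin d) →L[ℝ] EuclideanSpace ℝ (Fin d))
        - (Lj : EuclideanSpace ℝ (Fin d) →L[ℝ] EuclideanSpace ℝ (Fin d))‖ < ε := by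
      refine lt_of_le_of_lt hLjn ?_
      rw [div_lt_iff₀ hna]
      have h2Ns : 2*N*s = ε/2 := by rw [hs_def]; field_simp; ring
      calc ‖(Aeq j) (r • bj - aj)‖ ≤ N * ‖r • bj - aj‖ := hAle j _
        _ ≤ N * (2*s*‖aj‖) := by nlinarith [hsubnorm, hN0]
        _ = (ε/2) * ‖aj‖ := by rw [← h2Ns]; ring
        _ < ε * ‖aj‖ := by nlinarith [hna, hε0]
    set g : ℕ → EuclideanSpace ℝ (Fin d) := fun i => if i ≤ j then P i v₀ else r • P i w₀
      with hg
    have hgle : ∀ i, i ≤ j → g i = P i v₀ := by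
      intro i hi; rw [hg]; simp only [if_pos hi]
    have hggt : ∀ i, j < i → g i = r • P i w₀ := by
      intro i hi; rw [hg]; simp only [if_neg (Nat.not_le.mpr hi)]
    have hzero : ‖(Aeq 0 : EuclideanSpace ℝ (Fin d) →L[ℝ] EuclideanSpace ℝ (Fin d))
        - (Aeq 0 : EuclideanSpace ℝ (Fin d) →L[ℝ] EuclideanSpace ℝ (Fin d))‖ < ε := by
      rw [sub_self, norm_zero]; exact hε0
    refine ⟨g, ?_, ⟨r, hggt m hj⟩, ?_⟩
    · rw [hgle 0 (Nat.zero_le j)]; rfl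
    · intro i him
      rcases lt_trichotomy i j with hij | rfl | hij
      · refine ⟨Aeq i, by rw [sub_self, norm_zero]; exact hε0, ?_⟩
        rw [hgle i hij.le, hgle (i+1) (Nat.succ_le_of_lt hij)]
        rfl
      · refine ⟨Lj, hnormLj, ?_⟩
        rw [hgle i (le_refl i), hggt (i+1) (Nat.lt_succ_self i), ← haj, hLjx, ← map_add]
        have hsum : aj + (r • bj - aj) = r • bj := by abel
        rw [hsum, map_smul]
        rfl
      · refine ⟨Aeq i, by rw [sub_self, norm_zero]; exact hε0, ?_⟩
        rw [hggt i hij, hggt (i+1) (Nat.lt_succ_of_lt hij), map_smul]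
        rfl


end auxmain

theorem exists_interchanging_sequence
    (M : ℝ) (hM : 0 < M) (ε : ℝ) (hε : ε ∈ Set.Ioo (0 : ℝ) 1) :
    ∃ m₀ : ℕ, 0 < m₀ ∧
      ∀ m : ℕ, m₀ ≤ m →
      ∀ (X : Type) (_ : MetricSpace X), ∀ (_ : CompactSpace X),
      ∀ (f : X ≃ₜ X) (d : ℕ)
        (A : X → (EuclideanSpace ℝ (Fin d) ≃L[ℝ] EuclideanSpace ℝ (Fin d))),
        Continuous (fun x =>
          (A x : EuclideanSpace ℝ (Fin d) →L[ℝ] EuclideanSpace ℝ (Fin d))) →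
        (∀ x : X, ‖(A x : EuclideanSpace ℝ (Fin d) →L[ℝ] EuclideanSpace ℝ (Fin d))‖ < M) →
        ∀ y : X, (∀ k : ℕ, 1 ≤ k → (⇑f)^[k] y ≠ y) →
        ∀ v₀ w₀ : EuclideanSpace ℝ (Fin d), ‖v₀‖ = 1 → ‖w₀‖ = 1 →
          LinearIndependent ℝ ![v₀, w₀] →
          ‖cocycleIter (⇑f)
              (fun x => (A x : EuclideanSpace ℝ (Fin d) →L[ℝ] EuclideanSpace ℝ (Fin d)))
              m y v₀‖
            < 2 * ‖cocycleIter (⇑f)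
              (fun x => (A x : EuclideanSpace ℝ (Fin d) →L[ℝ] EuclideanSpace ℝ (Fin d)))
              m y w₀‖ →
          ∃ L : ℕ → (EuclideanSpace ℝ (Fin d) ≃L[ℝ] EuclideanSpace ℝ (Fin d)),
            (∀ j < m,
              ‖(A ((⇑f)^[j] y) : EuclideanSpace ℝ (Fin d) →L[ℝ] EuclideanSpace ℝ (Fin d))
                - (L j : EuclideanSpace ℝ (Fin d) →L[ℝ] EuclideanSpace ℝ (Fin d))‖ < ε) ∧
            seqComp
              (fun j => (L j : EuclideanSpace ℝ (Fin d) →L[ℝ] EuclideanSpace ℝ (Fin d)))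
              m v₀
              ∈ Submodule.span ℝ
                  {cocycleIter (⇑f)
                    (fun x => (A x : EuclideanSpace ℝ (Fin d) →L[ℝ] EuclideanSpace ℝ (Fin d)))
                    m y w₀} := by
  obtain ⟨m₀, hm₀, hmain⟩ :=
    aux_interchange (max M 1) (le_max_right M 1) ε hε.1 hε.2
  refine ⟨m₀, hm₀, ?_⟩
  intro m hm X _ _ f d A hAcont hAnorm y hy v₀ w₀ hv1 hw1 hli hyp
  exact hmain m hm d (fun j => A ((⇑f)^[j] y))
    (fun j => lt_of_lt_of_le (hAnorm _) (le_max_left M 1)) v₀ w₀ hv1 hw1 hyp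
end

section
/- Let V be a finite-dimensional real inner product space with two decompositions V = E₀ ⊕ F₀ and V = E₁ ⊕ F₁ into pairs of complementary nonzero subspaces, and let T : V → V be a linear map. Define the blocks T^{++} = π_{E₁} ∘ T restricted to E₀, T^{−+} = π_{F₁} ∘ T restricted to E₀, T^{+−} = π_{E₁} ∘ T restricted to F₀, and T^{−−} = π_{F₁} ∘ T restricted to F₀, where π_{E₁} and π_{F₁} are the projections associated with the decomposition V = E₁ ⊕ F₁, and set ‖T‖_max = max{‖T^{++}‖, ‖T^{+−}‖, ‖T^{−+}‖, ‖T^{−−}‖}. Suppose s₀, s₁ ∈ (0,1] are such that sin ∠(e,f) ≥ s₀ for all nonzero e ∈ E₀ and f ∈ F₀, and sin ∠(e,f) ≥ s₁ for all nonzero e ∈ E₁ and f ∈ F₁. Then: (1) ‖T‖ ≤ 4 s₀^{−1} ‖T‖_max, and (2) ‖T‖_max ≤ s₁^{−1} ‖T‖. -/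
open InnerProductGeometry

lemma norm_mul_sin_angle_le {V : Type*} [NormedAddCommGroup V] [InnerProductSpace ℝ V]
    (p q : V) (hq : q ≠ 0) : ‖p‖ * Real.sin (angle p q) ≤ ‖p + q‖ := by
  have hq' : (0:ℝ) < ‖q‖ := norm_pos_iff.mpr hq
  have hsin : 0 ≤ Real.sin (angle p q) :=
    Real.sin_nonneg_of_nonneg_of_le_pi (angle_nonneg p q) (angle_le_pi p q)
  have key : Real.sin (angle p q) * (‖p‖ * ‖q‖) = Real.sqrt
      ((inner ℝ p p : ℝ) * inner ℝ q q - inner ℝ p q * inner ℝ p q) := sin_angle_mul_norm_mul_norm p q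
  have hnn : (0:ℝ) ≤ (inner ℝ p p : ℝ) * inner ℝ q q - inner ℝ p q * inner ℝ p q :=
    sub_nonneg.mpr (real_inner_mul_inner_self_le p q)
  have h1 : (Real.sin (angle p q) * (‖p‖ * ‖q‖))^2 ≤ (‖p + q‖ * ‖q‖)^2 := by
    rw [key, Real.sq_sqrt hnn]
    have hpq : ‖p + q‖^2 = ‖p‖^2 + 2 * inner ℝ p q + ‖q‖^2 := norm_add_sq_real p q
    nlinarith [real_inner_self_eq_norm_sq p, real_inner_self_eq_norm_sq q,
      sq_nonneg ((inner ℝ p q : ℝ) + ‖q‖^2), sq_nonneg ‖q‖]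
  have ha : 0 ≤ Real.sin (angle p q) * (‖p‖ * ‖q‖) := by positivity
  have hb : 0 ≤ ‖p + q‖ * ‖q‖ := by positivity
  have h2 : Real.sin (angle p q) * (‖p‖ * ‖q‖) ≤ ‖p + q‖ * ‖q‖ := by nlinarith [h1, ha, hb]
  exact le_of_mul_le_mul_right (by nlinarith [h2]) hq'

lemma proj_norm_le {V : Type*} [NormedAddCommGroup V] [InnerProductSpace ℝ V]
    (P Q : Submodule ℝ V) (h : IsCompl P Q) {s : ℝ} (hs : s ∈ Set.Ioc (0:ℝ) 1)
    (hang : ∀ e ∈ P, ∀ f ∈ Q, e ≠ 0 → f ≠ 0 → s ≤ Real.sin (angle e f)) (v : V) :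
    ‖(P.linearProjOfIsCompl Q h v : V)‖ ≤ s⁻¹ * ‖v‖ := by
  set p : V := (P.linearProjOfIsCompl Q h v : V) with hp
  set q : V := (Q.linearProjOfIsCompl P h.symm v : V) with hq
  have hv : p + q = v := Submodule.projection_add_projection_eq_self h v
  have hs0 := hs.1
  have hsinv : (1:ℝ) ≤ s⁻¹ := by
    nlinarith [inv_pos.mpr hs.1, mul_inv_cancel₀ (ne_of_gt hs.1), hs.2]
  have main : s * ‖p‖ ≤ ‖v‖ := by
    by_cases hp0 : p = 0
    · simp [hp0]
    by_cases hq0 : q = 0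
    · rw [← hv, hq0, add_zero]; nlinarith [norm_nonneg p, hs.2]
    have hang' : s ≤ Real.sin (angle p q) :=
      hang p (P.linearProjOfIsCompl Q h v).2 q (Q.linearProjOfIsCompl P h.symm v).2 hp0 hq0
    have hle := norm_mul_sin_angle_le p q hq0
    rw [hv] at hle
    nlinarith [norm_nonneg p]
  calc ‖p‖ = s⁻¹ * (s * ‖p‖) := by field_simp
    _ ≤ s⁻¹ * ‖v‖ := mul_le_mul_of_nonneg_left main (by positivity)

/-- The block of `T` with domain `D` obtained by composing with the projection onto `P`
along `Q` (for the decomposition `V = P ⊕ Q` encoded by `h : IsCompl P Q`). -/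
noncomputable def blockOf {V : Type*} [NormedAddCommGroup V] [InnerProductSpace ℝ V]
    [FiniteDimensional ℝ V] (D P Q : Submodule ℝ V) (h : IsCompl P Q)
    (T : V →L[ℝ] V) : D →L[ℝ] P :=
  LinearMap.toContinuousLinearMap
    ((P.linearProjOfIsCompl Q h) ∘ₗ (T : V →ₗ[ℝ] V) ∘ₗ D.subtype)

/-- `‖T‖_max`: the maximum of the norms of the four blocks of `T` with respect to the
decompositions `V = E₀ ⊕ F₀` (domain) and `V = E₁ ⊕ F₁` (target). -/
noncomputable def blockMaxNorm {V : Type*} [NormedAddCommGroup V] [InnerProductSpace ℝ V]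
    [FiniteDimensional ℝ V] (E₀ F₀ E₁ F₁ : Submodule ℝ V) (h₁ : IsCompl E₁ F₁)
    (T : V →L[ℝ] V) : ℝ :=
  max (max ‖blockOf E₀ E₁ F₁ h₁ T‖ ‖blockOf F₀ E₁ F₁ h₁ T‖)
    (max ‖blockOf E₀ F₁ E₁ h₁.symm T‖ ‖blockOf F₀ F₁ E₁ h₁.symm T‖)

lemma blockOf_apply {V : Type*} [NormedAddCommGroup V] [InnerProductSpace ℝ V]
    [FiniteDimensional ℝ V] (D P Q : Submodule ℝ V) (h : IsCompl P Q)
    (T : V →L[ℝ] V) (x : D) :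
    (blockOf D P Q h T x : V) = (P.linearProjOfIsCompl Q h (T x) : V) := by
  simp [blockOf]

lemma blockOf_norm_le {V : Type*} [NormedAddCommGroup V] [InnerProductSpace ℝ V]
    [FiniteDimensional ℝ V] (D P Q : Submodule ℝ V) (h : IsCompl P Q)
    {s : ℝ} (hs : s ∈ Set.Ioc (0:ℝ) 1)
    (hang : ∀ e ∈ P, ∀ f ∈ Q, e ≠ 0 → f ≠ 0 → s ≤ Real.sin (angle e f))
    (T : V →L[ℝ] V) : ‖blockOf D P Q h T‖ ≤ s⁻¹ * ‖T‖ := by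
  have hs0 := hs.1
  apply ContinuousLinearMap.opNorm_le_bound _ (by positivity)
  intro x
  have h1 : ‖blockOf D P Q h T x‖ = ‖(P.linearProjOfIsCompl Q h (T x) : V)‖ := by
    rw [← Submodule.norm_coe, blockOf_apply]
  rw [h1]
  calc ‖(P.linearProjOfIsCompl Q h (T x) : V)‖ ≤ s⁻¹ * ‖T (x : V)‖ :=
        proj_norm_le P Q h hs hang (T x)
    _ ≤ s⁻¹ * (‖T‖ * ‖(x : V)‖) := by
        apply mul_le_mul_of_nonneg_left (T.le_opNorm _) (by positivity)
    _ = s⁻¹ * ‖T‖ * ‖x‖ := by rw [Submodule.norm_coe]; ring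

theorem norm_le_blockMaxNorm_and_blockMaxNorm_le_norm
    {V : Type*} [NormedAddCommGroup V] [InnerProductSpace ℝ V] [FiniteDimensional ℝ V]
    (E₀ F₀ E₁ F₁ : Submodule ℝ V)
    (hE₀ : E₀ ≠ ⊥) (hF₀ : F₀ ≠ ⊥) (hE₁ : E₁ ≠ ⊥) (hF₁ : F₁ ≠ ⊥)
    (h₀ : IsCompl E₀ F₀) (h₁ : IsCompl E₁ F₁)
    (T : V →L[ℝ] V) (s₀ s₁ : ℝ) (hs₀ : s₀ ∈ Set.Ioc (0 : ℝ) 1) (hs₁ : s₁ ∈ Set.Ioc (0 : ℝ) 1)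
    (hang₀ : ∀ e ∈ E₀, ∀ f ∈ F₀, e ≠ 0 → f ≠ 0 → s₀ ≤ Real.sin (angle e f))
    (hang₁ : ∀ e ∈ E₁, ∀ f ∈ F₁, e ≠ 0 → f ≠ 0 → s₁ ≤ Real.sin (angle e f)) :
    ‖T‖ ≤ 4 * s₀⁻¹ * blockMaxNorm E₀ F₀ E₁ F₁ h₁ T ∧
      blockMaxNorm E₀ F₀ E₁ F₁ h₁ T ≤ s₁⁻¹ * ‖T‖ := by
  have hang₀' : ∀ e ∈ F₀, ∀ f ∈ E₀, e ≠ 0 → f ≠ 0 → s₀ ≤ Real.sin (angle e f) := by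
    intro e he f hf he0 hf0; rw [angle_comm]; exact hang₀ f hf e he hf0 he0
  have hang₁' : ∀ e ∈ F₁, ∀ f ∈ E₁, e ≠ 0 → f ≠ 0 → s₁ ≤ Real.sin (angle e f) := by
    intro e he f hf he0 hf0; rw [angle_comm]; exact hang₁ f hf e he hf0 he0
  constructor
  · set M := blockMaxNorm E₀ F₀ E₁ F₁ h₁ T with hM
    have hMdef : M = max (max ‖blockOf E₀ E₁ F₁ h₁ T‖ ‖blockOf F₀ E₁ F₁ h₁ T‖)
        (max ‖blockOf E₀ F₁ E₁ h₁.symm T‖ ‖blockOf F₀ F₁ E₁ h₁.symm T‖) := rfl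
    have hb1 : ‖blockOf E₀ E₁ F₁ h₁ T‖ ≤ M := by
      rw [hMdef]; exact le_max_of_le_left (le_max_left _ _)
    have hb2 : ‖blockOf F₀ E₁ F₁ h₁ T‖ ≤ M := by
      rw [hMdef]; exact le_max_of_le_left (le_max_right _ _)
    have hb3 : ‖blockOf E₀ F₁ E₁ h₁.symm T‖ ≤ M := by
      rw [hMdef]; exact le_max_of_le_right (le_max_left _ _)
    have hb4 : ‖blockOf F₀ F₁ E₁ h₁.symm T‖ ≤ M := by
      rw [hMdef]; exact le_max_of_le_right (le_max_right _ _)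
    have hM0 : 0 ≤ M := (norm_nonneg (blockOf E₀ E₁ F₁ h₁ T)).trans hb1
    have hs₀0 := hs₀.1
    apply ContinuousLinearMap.opNorm_le_bound _ (by positivity)
    intro v
    set e := E₀.linearProjOfIsCompl F₀ h₀ v with he
    set f := F₀.linearProjOfIsCompl E₀ h₀.symm v with hf
    have hv : (e : V) + (f : V) = v := Submodule.projection_add_projection_eq_self h₀ v
    have hTe : T (e : V) = (blockOf E₀ E₁ F₁ h₁ T e : V) + (blockOf E₀ F₁ E₁ h₁.symm T e : V) := by
      rw [blockOf_apply, blockOf_apply]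
      exact (Submodule.projection_add_projection_eq_self h₁ (T e)).symm
    have hTf : T (f : V) = (blockOf F₀ E₁ F₁ h₁ T f : V) + (blockOf F₀ F₁ E₁ h₁.symm T f : V) := by
      rw [blockOf_apply, blockOf_apply]
      exact (Submodule.projection_add_projection_eq_self h₁ (T f)).symm
    have hTv : T v = (blockOf E₀ E₁ F₁ h₁ T e : V) + (blockOf E₀ F₁ E₁ h₁.symm T e : V)
        + ((blockOf F₀ E₁ F₁ h₁ T f : V) + (blockOf F₀ F₁ E₁ h₁.symm T f : V)) := by
      rw [← hTe, ← hTf, ← map_add, hv]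
    have hne : ‖(e : V)‖ ≤ s₀⁻¹ * ‖v‖ := proj_norm_le E₀ F₀ h₀ hs₀ hang₀ v
    have hnf : ‖(f : V)‖ ≤ s₀⁻¹ * ‖v‖ := proj_norm_le F₀ E₀ h₀.symm hs₀ hang₀' v
    have key : ∀ (D : Submodule ℝ V) (P Q : Submodule ℝ V) (h : IsCompl P Q) (x : D),
        ‖blockOf D P Q h T‖ ≤ M → ‖(x : V)‖ ≤ s₀⁻¹ * ‖v‖ →
        ‖(blockOf D P Q h T x : V)‖ ≤ M * (s₀⁻¹ * ‖v‖) := by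
      intro D P Q h x hB hx
      calc ‖(blockOf D P Q h T x : V)‖ = ‖blockOf D P Q h T x‖ := Submodule.norm_coe _
        _ ≤ ‖blockOf D P Q h T‖ * ‖x‖ := (blockOf D P Q h T).le_opNorm x
        _ = ‖blockOf D P Q h T‖ * ‖(x : V)‖ := by rw [Submodule.norm_coe]
        _ ≤ M * (s₀⁻¹ * ‖v‖) := mul_le_mul hB hx (norm_nonneg _) hM0
    calc ‖T v‖ ≤ ‖(blockOf E₀ E₁ F₁ h₁ T e : V)‖ + ‖(blockOf E₀ F₁ E₁ h₁.symm T e : V)‖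
        + (‖(blockOf F₀ E₁ F₁ h₁ T f : V)‖ + ‖(blockOf F₀ F₁ E₁ h₁.symm T f : V)‖) := by
          rw [hTv]
          exact le_trans (norm_add_le _ _) (by gcongr <;> exact norm_add_le _ _)
      _ ≤ M * (s₀⁻¹ * ‖v‖) + M * (s₀⁻¹ * ‖v‖) + (M * (s₀⁻¹ * ‖v‖) + M * (s₀⁻¹ * ‖v‖)) := by
          gcongr ?_ + ?_ + (?_ + ?_)
          · exact key E₀ E₁ F₁ h₁ e hb1 hne
          · exact key E₀ F₁ E₁ h₁.symm e hb3 hne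
          · exact key F₀ E₁ F₁ h₁ f hb2 hnf
          · exact key F₀ F₁ E₁ h₁.symm f hb4 hnf
      _ = 4 * s₀⁻¹ * M * ‖v‖ := by ring
  · refine max_le (max_le ?_ ?_) (max_le ?_ ?_)
    · exact blockOf_norm_le E₀ E₁ F₁ h₁ hs₁ hang₁ T
    · exact blockOf_norm_le F₀ E₁ F₁ h₁ hs₁ hang₁ T
    · exact blockOf_norm_le E₀ F₁ E₁ h₁.symm hs₁ hang₁' T
    · exact blockOf_norm_le F₀ F₁ E₁ h₁.symm hs₁ hang₁' T
end

section
/- Let (X, μ) be a probability space and f : X → X a bimeasurable bijection preserving μ. Let C ⊆ X be a measurable set with μ(C) > 0 and set Γ = ⋃_{n∈ℤ} f^n(C). Fix γ > 0. Then for μ-almost every x ∈ Γ there exists N ∈ ℕ such that for every n ≥ N and every t ∈ (0,1) there exists ℓ ∈ {0,1,…,n} with t − γ ≤ ℓ/n ≤ t + γ and f^ℓ(x) ∈ C. -/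
set_option linter.unusedSectionVars false
set_option linter.unnecessarySimpa false
set_option linter.unusedTactic false
set_option linter.unusedVariables false
set_option maxHeartbeats 1000000

open MeasureTheory Function


open Filter

section Main
variable {X : Type*} [MeasurableSpace X]
/-- Birkhoff sums. -/
noncomputable def birkS (T : X → X) (g : X → ℝ) (n : ℕ) (x : X) : ℝ :=
  ∑ i ∈ Finset.range n, g (T^[i] x)

/-- running max of Birkhoff sums (with 0). -/
noncomputable def maxQ (T : X → X) (g : X → ℝ) : ℕ → X → ℝ
  | 0 => fun _ => 0
  | (N+1) => fun x => max 0 (g x + maxQ T g N (T x))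

lemma maxQ_nonneg (T : X → X) (g : X → ℝ) (N : ℕ) (x : X) : 0 ≤ maxQ T g N x := by
  cases N with
  | zero => simp [maxQ]
  | succ N => exact le_max_left _ _

lemma maxQ_measurable {T : X → X} {g : X → ℝ} (hT : Measurable T) (hg : Measurable g) (N : ℕ) :
    Measurable (maxQ T g N) := by
  induction N with
  | zero => simpa [maxQ] using measurable_const
  | succ N ih =>
      exact measurable_const.max (hg.add (ih.comp hT))

lemma maxQ_mono (T : X → X) (g : X → ℝ) (N : ℕ) (x : X) :
    maxQ T g N x ≤ maxQ T g (N+1) x := by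
  induction N generalizing x with
  | zero => exact maxQ_nonneg T g 1 x
  | succ N ih =>
      exact max_le_max le_rfl (by linarith [ih (T x)])

lemma maxQ_abs_le {T : X → X} {g : X → ℝ} (hg : ∀ x, |g x| ≤ 1) (N : ℕ) (x : X) :
    |maxQ T g N x| ≤ N := by
  induction N generalizing x with
  | zero => simp [maxQ]
  | succ N ih =>
      rw [abs_of_nonneg (maxQ_nonneg T g _ x)]
      have h1 := abs_le.1 (hg x)
      have h2 := abs_le.1 (ih (T x))
      have : max 0 (g x + maxQ T g N (T x)) ≤ ((N:ℝ) + 1) :=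
        max_le (by positivity) (by linarith [h1.2, h2.2])
      push_cast
      exact this

lemma maxQ_ge_birkS (T : X → X) (g : X → ℝ) {n N : ℕ} (h : n ≤ N) (x : X) :
    birkS T g n x ≤ maxQ T g N x := by
  induction N generalizing n x with
  | zero =>
      interval_cases n
      simp [birkS, maxQ]
  | succ N ih =>
      rcases Nat.eq_zero_or_pos n with rfl | hn
      · simpa [birkS] using maxQ_nonneg T g (N+1) x
      · obtain ⟨m, rfl⟩ : ∃ m, n = m + 1 := ⟨n - 1, (Nat.succ_pred_eq_of_pos hn).symm⟩
        have hS : birkS T g (m+1) x = g x + birkS T g m (T x) := by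
          simp only [birkS]
          rw [Finset.sum_range_succ']
          simp [Function.iterate_succ_apply, add_comm]
        rw [hS]
        have := ih (Nat.lt_succ_iff.mp h) (T x)
        calc g x + birkS T g m (T x) ≤ g x + maxQ T g N (T x) := by linarith
          _ ≤ maxQ T g (N+1) x := le_max_right _ _



lemma maxQ_succ (T : X → X) (g : X → ℝ) (N : ℕ) (x : X) :
  maxQ T g (N+1) x = max 0 (g x + maxQ T g N (T x)) := rfl
variable {μ : Measure X} [IsFiniteMeasure μ] {T : X → X} {g : X → ℝ}

lemma bdd_integrable {h : X → ℝ} (hm : Measurable h) {c : ℝ} (hb : ∀ x, |h x| ≤ c) :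
    Integrable h μ :=
  (integrable_const c).mono' hm.aestronglyMeasurable (Eventually.of_forall (by simpa using hb))

lemma maximal_step (hTm : MeasurePreserving T μ μ) (hTe : MeasurableEmbedding T)
    (hg : Measurable g) (hgb : ∀ x, |g x| ≤ 1) (N : ℕ) :
    0 ≤ ∫ x in {y | 0 < maxQ T g (N+1) y}, g x ∂μ := by
  set A : Set X := {y | 0 < maxQ T g (N+1) y} with hA
  have hQm : ∀ M, Measurable (maxQ T g M) := maxQ_measurable hTm.measurable hg
  have hAm : MeasurableSet A := measurableSet_lt measurable_const (hQm (N+1))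
  have hQint : ∀ M, Integrable (maxQ T g M) μ :=
    fun M => bdd_integrable (hQm M) (maxQ_abs_le hgb M)
  have hQTint : Integrable (fun x => maxQ T g N (T x)) μ :=
    bdd_integrable ((hQm N).comp hTm.measurable) (fun x => maxQ_abs_le hgb N (T x))
  have hgint : Integrable g μ := bdd_integrable hg hgb
  -- on A, g x = maxQ (N+1) x - maxQ N (T x)
  have key : ∀ x ∈ A, g x = maxQ T g (N+1) x - maxQ T g N (T x) := by
    intro x hx
    have h0 : 0 < maxQ T g (N+1) x := hx
    rw [maxQ_succ] at h0 ⊢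
    rcases max_cases (0:ℝ) (g x + maxQ T g N (T x)) with ⟨he, _⟩ | ⟨he, _⟩
    · rw [he] at h0; exact absurd h0 (lt_irrefl 0)
    · rw [he]; ring
  have h1 : ∫ x in A, g x ∂μ
      = ∫ x in A, maxQ T g (N+1) x ∂μ - ∫ x in A, maxQ T g N (T x) ∂μ := by
    rw [← integral_sub ((hQint (N+1)).integrableOn) (hQTint.integrableOn)]
    exact setIntegral_congr_fun hAm (fun x hx => by rw [key x hx])
  have h2 : ∫ x in A, maxQ T g (N+1) x ∂μ = ∫ x, maxQ T g (N+1) x ∂μ := by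
    rw [← integral_indicator hAm]
    congr 1
    funext x
    by_cases hx : x ∈ A
    · simp [Set.indicator_of_mem hx]
    · have : maxQ T g (N+1) x = 0 :=
        le_antisymm (not_lt.1 hx) (maxQ_nonneg _ _ _ _)
      simp [Set.indicator_of_notMem hx, this]
  have h3 : ∫ x in A, maxQ T g N (T x) ∂μ ≤ ∫ x, maxQ T g N (T x) ∂μ :=
    setIntegral_le_integral hQTint (Eventually.of_forall (fun x => maxQ_nonneg _ _ _ _))
  have h4 : ∫ x, maxQ T g N (T x) ∂μ = ∫ x, maxQ T g N x ∂μ :=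
    hTm.integral_comp hTe _
  have h5 : ∫ x, maxQ T g N x ∂μ ≤ ∫ x, maxQ T g (N+1) x ∂μ :=
    integral_mono (hQint N) (hQint (N+1)) (fun x => maxQ_mono T g N x)
  linarith

lemma maximal_invariant (hTm : MeasurePreserving T μ μ) (hTe : MeasurableEmbedding T)
    (hg : Measurable g) (hgb : ∀ x, |g x| ≤ 1)
    {A : Set X} (hAm : MeasurableSet A) (hAinv : T ⁻¹' A = A)
    (hA : ∀ x ∈ A, ∃ n, 0 < birkS T g n x) :
    0 ≤ ∫ x in A, g x ∂μ := by
  set ν := μ.restrict A with hν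
  have hTν : MeasurePreserving T ν ν := by
    constructor
    · exact hTm.measurable
    · ext s hs
      rw [Measure.map_apply hTm.measurable hs, hν, Measure.restrict_apply hs,
        Measure.restrict_apply (hTm.measurable hs)]
      calc μ (T ⁻¹' s ∩ A) = μ (T ⁻¹' s ∩ T ⁻¹' A) := by rw [hAinv]
        _ = μ (T ⁻¹' (s ∩ A)) := by rw [Set.preimage_inter]
        _ = μ (s ∩ A) := hTm.measure_preimage (hs.inter hAm).nullMeasurableSet
  have hQm : ∀ M, Measurable (maxQ T g M) := maxQ_measurable hTm.measurable hg
  set s : ℕ → Set X := fun N => {y | 0 < maxQ T g (N+1) y} with hs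
  have hsm : ∀ N, MeasurableSet (s N) := fun N => measurableSet_lt measurable_const (hQm (N+1))
  have hmono : Monotone s := by
    intro a b hab
    induction b, hab using Nat.le_induction with
    | base => exact le_rfl
    | succ b hab ih =>
        exact ih.trans (fun x hx => lt_of_lt_of_le hx (maxQ_mono T g (b+1) x))
  have hgint : Integrable g ν := bdd_integrable hg hgb
  have hstep : ∀ N, 0 ≤ ∫ x in s N, g x ∂ν := fun N => maximal_step hTν hTe hg hgb N
  have htend : Tendsto (fun N => ∫ x in s N, g x ∂ν) atTop (nhds (∫ x in ⋃ N, s N, g x ∂ν)) :=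
    tendsto_setIntegral_of_monotone hsm hmono hgint.integrableOn
  have hlim : 0 ≤ ∫ x in ⋃ N, s N, g x ∂ν := ge_of_tendsto' htend hstep
  have hsub : A ⊆ ⋃ N, s N := by
    intro x hx
    obtain ⟨n, hn⟩ := hA x hx
    refine Set.mem_iUnion.2 ⟨n, ?_⟩
    exact lt_of_lt_of_le hn (maxQ_ge_birkS T g (Nat.le_succ n) x)
  have : ∫ x in ⋃ N, s N, g x ∂ν = ∫ x in A, g x ∂μ := by
    rw [hν, Measure.restrict_restrict (MeasurableSet.iUnion hsm)]
    rw [Set.inter_eq_self_of_subset_right hsub]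
  rw [← this]; exact hlim



lemma birkS_shift (T : X → X) (g : X → ℝ) (a n : ℕ) (x : X) :
    birkS T g (a + n) x = birkS T g a x + birkS T g n (T^[a] x) := by
  simp only [birkS]
  rw [Finset.sum_range_add]
  congr 1
  refine Finset.sum_congr rfl (fun i _ => ?_)
  rw [add_comm a i, Function.iterate_add_apply]

lemma birkS_sub_const (T : X → X) (g : X → ℝ) (c : ℝ) (n : ℕ) (x : X) :
    birkS T (fun y => g y - c) n x = birkS T g n x - n * c := by
  simp [birkS, Finset.sum_sub_distrib, mul_comm]

lemma birkS_const_sub (T : X → X) (g : X → ℝ) (c : ℝ) (n : ℕ) (x : X) :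
    birkS T (fun y => c - g y) n x = n * c - birkS T g n x := by
  simp [birkS, Finset.sum_sub_distrib, mul_comm]

variable (f : X ≃ X) (C : Set X)

/-- visit count as a real number -/
noncomputable def vcount (n : ℕ) (x : X) : ℝ :=
  birkS (⇑f) (C.indicator (fun _ => (1:ℝ))) n x

lemma vcount_term_nonneg (x : X) : 0 ≤ C.indicator (fun _ => (1:ℝ)) x :=
  Set.indicator_nonneg (fun _ _ => zero_le_one) x

lemma vcount_term_le_one (x : X) : C.indicator (fun _ => (1:ℝ)) x ≤ 1 :=
  Set.indicator_le_self' (fun _ _ => zero_le_one) x |>.trans (by by_cases h : x ∈ C <;> simp [h])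

lemma vcount_nonneg (n : ℕ) (x : X) : 0 ≤ vcount f C n x := by
  unfold vcount birkS
  exact Finset.sum_nonneg (fun i _ => vcount_term_nonneg C _)

lemma vcount_le (n : ℕ) (x : X) : vcount f C n x ≤ n := by
  have : vcount f C n x ≤ ∑ _i ∈ Finset.range n, (1:ℝ) := by
    unfold vcount birkS
    exact Finset.sum_le_sum (fun i _ => vcount_term_le_one C _)
  simpa using this

lemma vcount_shift (a n : ℕ) (x : X) :
    vcount f C (a + n) x = vcount f C a x + vcount f C n ((⇑f)^[a] x) :=
  birkS_shift _ _ a n x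

lemma vcount_mono (x : X) {m n : ℕ} (h : m ≤ n) : vcount f C m x ≤ vcount f C n x := by
  obtain ⟨k, rfl⟩ := Nat.exists_eq_add_of_le h
  have h1 := vcount_shift f C m k x
  have := vcount_nonneg f C k ((⇑f)^[m] x)
  linarith

lemma vcount_measurable (hf : Measurable f) (hC : MeasurableSet C) (n : ℕ) :
    Measurable (vcount f C n) := by
  unfold vcount birkS
  apply Finset.measurable_sum
  intro i _
  exact (measurable_const.indicator hC).comp (hf.iterate i)

/-- coercion of integer powers -/
lemma zpow_coe_cases (m : ℤ) :
    ⇑(f^m) = (⇑f)^[m.natAbs] ∨ ⇑(f^m) = (⇑f.symm)^[m.natAbs] := by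
  obtain ⟨a, rfl | rfl⟩ : ∃ a : ℕ, m = a ∨ m = -a := ⟨m.natAbs, Int.natAbs_eq m⟩
  · left
    rw [zpow_natCast, Equiv.Perm.coe_pow]
    simp
  · right
    rw [zpow_neg, zpow_natCast, ← inv_pow, Equiv.Perm.coe_pow]
    have : (⇑f⁻¹) = ⇑f.symm := by rw [Equiv.Perm.inv_def]
    rw [this]
    simp

lemma measurable_zpow (hf : Measurable f) (hf' : Measurable f.symm) (m : ℤ) :
    Measurable ⇑(f^m) := by
  rcases zpow_coe_cases f m with h | h <;> rw [h]
  · exact hf.iterate _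
  · exact hf'.iterate _

lemma vcount_zpow_le (m : ℤ) (n : ℕ) (x : X) :
    vcount f C n (⇑(f^m) x) ≤ m.natAbs + vcount f C (m.natAbs + n) x := by
  set a := m.natAbs with ha
  rcases zpow_coe_cases f m with h | h <;> rw [h]
  · -- forward iterate: vcount n (f^[a] x) = vcount (a+n) x - vcount a x
    have := vcount_shift f C a n x
    have h0 := vcount_nonneg f C a x
    have : vcount f C n ((⇑f)^[a] x) ≤ vcount f C (a + n) x := by linarith
    have ha0 : (0:ℝ) ≤ a := Nat.cast_nonneg a
    linarith
  · -- backward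
    set y := (⇑f.symm)^[a] x with hy
    have hinv : (⇑f)^[a] y = x := by
      rw [hy]
      exact (Function.LeftInverse.iterate f.apply_symm_apply a) x
    have hshift := vcount_shift f C a n y
    rw [hinv] at hshift
    have h1 : vcount f C n y ≤ vcount f C (a + n) y := vcount_mono f C y (Nat.le_add_left n a)
    have h2 : vcount f C a y ≤ a := vcount_le f C a y
    have h3 : vcount f C n x ≤ vcount f C (a + n) x := vcount_mono f C x (Nat.le_add_left n a)
    linarith


lemma Epq_null (hf : Measurable f) (hf' : Measurable f.symm)
    {ν : Measure X} [IsProbabilityMeasure ν] (hν : MeasurePreserving (⇑f) ν ν)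
    (hC : MeasurableSet C) {p q : ℝ} (hp : 0 < p) (hq : q ≤ 1) (hpq : p < q) :
    ν {x | (∃ᶠ n in atTop, vcount f C n x < p * n) ∧
           (∃ᶠ n in atTop, q * n < vcount f C n x)} = 0 := by
  set g0 : X → ℝ := C.indicator (fun _ => (1:ℝ)) with hg0def
  have hg0m : Measurable g0 := measurable_const.indicator hC
  have hg0range : ∀ y, 0 ≤ g0 y ∧ g0 y ≤ 1 :=
    fun y => ⟨vcount_term_nonneg C y, vcount_term_le_one C y⟩
  set p' : ℝ := (2*p+q)/3 with hp'def
  set q' : ℝ := (p+2*q)/3 with hq'def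
  have hpp' : p < p' := by rw [hp'def]; linarith
  have hp'q' : p' < q' := by rw [hp'def, hq'def]; linarith
  have hq'q : q' < q := by rw [hq'def]; linarith
  have hp'pos : 0 < p' := lt_trans hp hpp'
  have hp'le : p' ≤ 1 := le_of_lt (lt_of_lt_of_le (hp'q'.trans hq'q) hq)
  have hq'pos : 0 < q' := lt_trans hp'pos hp'q'
  have hq'le : q' ≤ 1 := le_of_lt (lt_of_lt_of_le hq'q hq)
  set E : Set X := {x | (∃ᶠ n in atTop, vcount f C n x < p * n) ∧
           (∃ᶠ n in atTop, q * n < vcount f C n x)} with hEdef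
  have hEm : MeasurableSet E := by
    have e1 : {x | ∃ᶠ n in atTop, vcount f C n x < p * n}
        = ⋂ m : ℕ, ⋃ n : ℕ, ⋃ (_ : m ≤ n), {x | vcount f C n x < p * n} := by
      ext x
      simp [frequently_atTop, Set.mem_iInter, Set.mem_iUnion]
    have e2 : {x | ∃ᶠ n in atTop, q * n < vcount f C n x}
        = ⋂ m : ℕ, ⋃ n : ℕ, ⋃ (_ : m ≤ n), {x | q * n < vcount f C n x} := by
      ext x
      simp [frequently_atTop, Set.mem_iInter, Set.mem_iUnion]
    have : E = {x | ∃ᶠ n in atTop, vcount f C n x < p * n}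
        ∩ {x | ∃ᶠ n in atTop, q * n < vcount f C n x} := rfl
    rw [this, e1, e2]
    apply MeasurableSet.inter
    · exact MeasurableSet.iInter (fun m => MeasurableSet.iUnion (fun n =>
        MeasurableSet.iUnion (fun _ =>
          measurableSet_lt (vcount_measurable f C hf hC n) measurable_const)))
    · exact MeasurableSet.iInter (fun m => MeasurableSet.iUnion (fun n =>
        MeasurableSet.iUnion (fun _ =>
          measurableSet_lt measurable_const (vcount_measurable f C hf hC n))))
  set A : Set X := ⋃ m : ℤ, ⇑(f^m) ⁻¹' E with hAdef
  have hAm : MeasurableSet A :=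
    MeasurableSet.iUnion (fun m => hEm.preimage (measurable_zpow f hf hf' m))
  have hAinv : ⇑f ⁻¹' A = A := by
    ext x
    simp only [hAdef, Set.mem_iUnion, Set.mem_preimage]
    constructor
    · rintro ⟨m, hm⟩
      refine ⟨m + 1, ?_⟩
      rwa [zpow_add_one, Equiv.Perm.mul_apply]
    · rintro ⟨m, hm⟩
      refine ⟨m - 1, ?_⟩
      rw [← Equiv.Perm.mul_apply, ← zpow_add_one, sub_add_cancel]
      exact hm
  have hEsubA : E ⊆ A := by
    intro x hx
    refine Set.mem_iUnion.2 ⟨0, ?_⟩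
    simpa using hx
  -- claim 1 : enough upcrossing above q'
  have claim1 : ∀ x ∈ A, ∃ n, 0 < birkS (⇑f) (fun y => g0 y - q') n x := by
    intro x hx
    obtain ⟨m, hm⟩ := Set.mem_iUnion.1 hx
    rw [Set.mem_preimage] at hm
    set a := m.natAbs with hadef
    set y := ⇑(f^m) x with hydef
    have freq2 : ∃ᶠ n in atTop, q * n < vcount f C n y := hm.2
    obtain ⟨n, hn_ge, hn⟩ := frequently_atTop.1 freq2 (⌈(a*(1+q'))/(q-q')⌉₊ + 1)
    have hcast : (a*(1+q'))/(q-q') + 1 ≤ (n:ℝ) := by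
      have h1 : ((⌈(a*(1+q'))/(q-q')⌉₊ : ℕ):ℝ) + 1 ≤ (n:ℝ) := by
        exact_mod_cast hn_ge
      have h2 : (a*(1+q'))/(q-q') ≤ (⌈(a*(1+q'))/(q-q')⌉₊:ℝ) := Nat.le_ceil _
      linarith
    have harith : a * (1+q') < (q - q') * n := by
      have hqq' : 0 < q - q' := by linarith
      have := (div_le_iff₀ hqq').1 (by linarith : (a*(1+q'))/(q-q') ≤ (n:ℝ) - 1)
      nlinarith
    have hbound := vcount_zpow_le f C m n x
    rw [← hadef, ← hydef] at hbound
    refine ⟨a + n, ?_⟩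
    rw [birkS_sub_const]
    have hveq : birkS (⇑f) g0 (a+n) x = vcount f C (a+n) x := rfl
    rw [hveq]
    have hvl : q * n - a ≤ vcount f C (a+n) x := by linarith
    have : ((a:ℝ) + n) * q' < q * n - a := by push_cast; nlinarith
    push_cast
    push_cast at hvl this
    linarith
  -- claim 2 : enough downcrossing below p'
  have claim2 : ∀ x ∈ A, ∃ n, 0 < birkS (⇑f) (fun y => p' - g0 y) n x := by
    intro x hx
    obtain ⟨m, hm⟩ := Set.mem_iUnion.1 hx
    rw [Set.mem_preimage] at hm
    set a := m.natAbs with hadef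
    set y := ⇑(f^m) x with hydef
    have freq1 : ∃ᶠ k in atTop, vcount f C k y < p * k := hm.1
    obtain ⟨k, hk_ge, hk⟩ := frequently_atTop.1 freq1 (a + (⌈(a*(1+p))/(p'-p)⌉₊ + 1))
    set n := k - a with hndef
    have hkan : k = a + n := by omega
    have hncast : (a*(1+p))/(p'-p) + 1 ≤ (n:ℝ) := by
      have h1 : ⌈(a*(1+p))/(p'-p)⌉₊ + 1 ≤ n := by omega
      have h2 : (a*(1+p))/(p'-p) ≤ (⌈(a*(1+p))/(p'-p)⌉₊:ℝ) := Nat.le_ceil _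
      have : ((⌈(a*(1+p))/(p'-p)⌉₊:ℕ):ℝ) + 1 ≤ (n:ℝ) := by exact_mod_cast h1
      linarith
    have harith : a * (1+p) < (p' - p) * n := by
      have hpp : 0 < p' - p := by linarith
      have := (div_le_iff₀ hpp).1 (by linarith : (a*(1+p))/(p'-p) ≤ (n:ℝ) - 1)
      nlinarith
    -- x = f^(-m) y
    have hxy : ⇑(f^(-m)) y = x := by
      rw [hydef, zpow_neg, ← Equiv.Perm.mul_apply, inv_mul_cancel]
      simp
    have hbound := vcount_zpow_le f C (-m) n y
    rw [hxy, Int.natAbs_neg, ← hadef] at hbound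
    -- hbound : vcount f C n x ≤ a + vcount f C (a+n) y
    have hky : vcount f C k y < p * k := hk
    rw [hkan] at hky
    refine ⟨n, ?_⟩
    rw [birkS_const_sub]
    have hveq : birkS (⇑f) g0 n x = vcount f C n x := rfl
    rw [hveq]
    have : vcount f C n x < a + p * (a + n) := by push_cast at hky ⊢; linarith
    push_cast at this ⊢
    nlinarith
  -- measurable embedding
  have hTe : MeasurableEmbedding (⇑f) := by
    have : MeasurableEmbedding (⇑(MeasurableEquiv.mk f hf hf')) :=
      (MeasurableEquiv.mk f hf hf').measurableEmbedding
    exact this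
  -- apply maximal inequality on both sides
  have hgb1 : ∀ y, |g0 y - q'| ≤ 1 := by
    intro y
    obtain ⟨h0, h1⟩ := hg0range y
    rw [abs_le]; constructor <;> linarith
  have hgb2 : ∀ y, |p' - g0 y| ≤ 1 := by
    intro y
    obtain ⟨h0, h1⟩ := hg0range y
    rw [abs_le]; constructor <;> linarith
  have I1 : 0 ≤ ∫ x in A, (g0 x - q') ∂ν :=
    maximal_invariant hν hTe (hg0m.sub measurable_const) hgb1 hAm hAinv claim1
  have I2 : 0 ≤ ∫ x in A, (p' - g0 x) ∂ν :=
    maximal_invariant hν hTe (measurable_const.sub hg0m) hgb2 hAm hAinv claim2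
  -- compute the integrals
  have hg0int : Integrable g0 (ν.restrict A) :=
    bdd_integrable hg0m (fun y => by
      obtain ⟨h0, h1⟩ := hg0range y
      rw [abs_of_nonneg h0]; exact h1)
  have hint1 : ∫ x in A, g0 x ∂ν = (ν (A ∩ C)).toReal := by
    rw [hg0def, setIntegral_indicator hC]
    simp [setIntegral_const]
    rfl
  have hconst : ∀ c : ℝ, ∫ _x in A, c ∂ν = (ν A).toReal * c := by
    intro c
    rw [setIntegral_const]
    simp [smul_eq_mul]
    exact Or.inl rfl
  have e1 : ∫ x in A, (g0 x - q') ∂ν = (ν (A ∩ C)).toReal - (ν A).toReal * q' := by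
    rw [integral_sub hg0int (integrable_const _), hint1, hconst]
  have e2 : ∫ x in A, (p' - g0 x) ∂ν = (ν A).toReal * p' - (ν (A ∩ C)).toReal := by
    rw [integral_sub (integrable_const _) hg0int, hint1, hconst]
  rw [e1] at I1
  rw [e2] at I2
  have hAreal : (ν A).toReal = 0 := by nlinarith [ENNReal.toReal_nonneg (a := ν A)]
  have hA0 : ν A = 0 := by
    rcases (ENNReal.toReal_eq_zero_iff _).1 hAreal with h | h
    · exact h
    · exact absurd h (measure_ne_top ν A)
  have hle : ν E ≤ ν A := measure_mono hEsubA
  rw [hA0] at hle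
  exact le_antisymm hle (by simp)

-- ## Part 5 : the set where the visit frequency tends to zero

/-- tendsto-zero set -/
def zeroSet (f : X ≃ X) (C : Set X) : Set X :=
  {x | Tendsto (fun n : ℕ => vcount f C n x / n) atTop (nhds 0)}

lemma abs_vcount_div_le_one (n : ℕ) (x : X) : |vcount f C n x / n| ≤ 1 := by
  rcases Nat.eq_zero_or_pos n with rfl | hn
  · simp [vcount, birkS]
  · have h1 := vcount_nonneg f C n x
    have h2 := vcount_le f C n x
    have hn' : (0:ℝ) < n := by exact_mod_cast hn
    rw [abs_of_nonneg (div_nonneg h1 (Nat.cast_nonneg n))]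
    rw [div_le_one hn']
    exact h2

lemma ratio_succ_tendsto : Tendsto (fun n : ℕ => ((n:ℝ)+1) / n) atTop (nhds 1) := by
  have h : Tendsto (fun n : ℕ => 1 + 1/(n:ℝ)) atTop (nhds (1 + 0)) :=
    tendsto_const_nhds.add tendsto_one_div_atTop_nhds_zero_nat
  rw [add_zero] at h
  apply h.congr'
  filter_upwards [eventually_ge_atTop 1] with n hn
  have hn' : (0:ℝ) < n := by exact_mod_cast hn
  field_simp

lemma zeroSet_succ_aux {x : X}
    (h : Tendsto (fun n : ℕ => vcount f C n x / n) atTop (nhds 0)) :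
    Tendsto (fun n : ℕ => vcount f C (n+1) x / n) atTop (nhds 0) := by
  have h1 : Tendsto (fun n : ℕ => vcount f C (n+1) x / ((n:ℝ)+1)) atTop (nhds 0) := by
    have h2 := h.comp (tendsto_add_atTop_nat 1)
    apply h2.congr
    intro n
    simp only [Function.comp_apply]
    push_cast
    ring
  have h2 := h1.mul ratio_succ_tendsto
  rw [zero_mul] at h2
  apply h2.congr'
  filter_upwards [eventually_ge_atTop 1] with n hn
  have hn' : (0:ℝ) < n := by exact_mod_cast hn
  field_simp

lemma zeroSet_invariant (f : X ≃ X) (C : Set X) : ⇑f ⁻¹' zeroSet f C = zeroSet f C := by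
  ext x
  simp only [Set.mem_preimage, zeroSet, Set.mem_setOf_eq]
  have hshift : ∀ n : ℕ, vcount f C (1 + n) x = vcount f C 1 x + vcount f C n (f x) := by
    intro n
    have := vcount_shift f C 1 n x
    simpa using this
  constructor
  · -- from convergence at f x to convergence at x
    intro hfx
    have h2 : Tendsto (fun n : ℕ => (vcount f C 1 x + vcount f C n (f x)) / n) atTop (nhds 0) := by
      have hc : Tendsto (fun n : ℕ => vcount f C 1 x / n) atTop (nhds 0) := by
        have h3 := tendsto_one_div_atTop_nhds_zero_nat.const_mul (vcount f C 1 x)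
        rw [mul_zero] at h3
        apply h3.congr
        intro n; rw [mul_one_div]
      have h4 := hc.add hfx
      rw [add_zero] at h4
      apply h4.congr
      intro n
      ring
    apply squeeze_zero'
      (Eventually.of_forall (fun n => div_nonneg (vcount_nonneg f C n x) (Nat.cast_nonneg n)))
      ?_ h2
    apply Eventually.of_forall
    intro n
    have h3 : vcount f C n x ≤ vcount f C 1 x + vcount f C n (f x) := by
      have h4 := hshift n
      have h5 : vcount f C n x ≤ vcount f C (1+n) x := vcount_mono f C x (by omega)
      linarith
    gcongr
  · -- from convergence at x to convergence at f x
    intro hx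
    have h2 : Tendsto (fun n : ℕ => vcount f C (n+1) x / n) atTop (nhds 0) :=
      zeroSet_succ_aux f C hx
    apply squeeze_zero'
      (Eventually.of_forall
        (fun n => div_nonneg (vcount_nonneg f C n (f x)) (Nat.cast_nonneg n)))
      ?_ h2
    apply Eventually.of_forall
    intro n
    have h3 : vcount f C n (f x) ≤ vcount f C (n+1) x := by
      have h4 := hshift n
      have h0 := vcount_nonneg f C 1 x
      rw [add_comm 1 n] at h4
      linarith
    gcongr

lemma zeroSet_symm_invariant (f : X ≃ X) (C : Set X) :
    ⇑f.symm ⁻¹' zeroSet f C = zeroSet f C := by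
  have h1 := zeroSet_invariant f C
  have h2 : ⇑f '' zeroSet f C = zeroSet f C := by
    conv_lhs => rw [← h1]
    exact Set.image_preimage_eq _ f.surjective
  rw [← Equiv.image_eq_preimage_symm]
  exact h2

lemma zeroSet_iterate_invariant (f : X ≃ X) (C : Set X) (a : ℕ) :
    (⇑f)^[a] ⁻¹' zeroSet f C = zeroSet f C := by
  induction a with
  | zero => simp
  | succ a ih =>
      rw [Function.iterate_succ, Set.preimage_comp, ih, zeroSet_invariant]

lemma zeroSet_symm_iterate_invariant (f : X ≃ X) (C : Set X) (a : ℕ) :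
    (⇑f.symm)^[a] ⁻¹' zeroSet f C = zeroSet f C := by
  induction a with
  | zero => simp
  | succ a ih =>
      rw [Function.iterate_succ, Set.preimage_comp, ih, zeroSet_symm_invariant]

lemma zeroSet_zpow_invariant (f : X ≃ X) (C : Set X) (m : ℤ) :
    ⇑(f^m) ⁻¹' zeroSet f C = zeroSet f C := by
  rcases zpow_coe_cases f m with h | h <;> rw [h]
  · exact zeroSet_iterate_invariant f C _
  · exact zeroSet_symm_iterate_invariant f C _

lemma zeroSet_measurable (hf : Measurable f) (hC : MeasurableSet C) :
    MeasurableSet (zeroSet f C) := by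
  have : zeroSet f C = ⋂ k : ℕ, ⋃ m : ℕ, ⋂ n : ℕ, ⋂ (_ : m ≤ n),
      {x | vcount f C n x / n < 1/((k:ℝ)+1)} := by
    ext x
    simp only [zeroSet, Set.mem_setOf_eq, Set.mem_iInter, Set.mem_iUnion, Set.mem_setOf_eq]
    constructor
    · intro hx k
      have hev : ∀ᶠ n in atTop, vcount f C n x / n < 1/((k:ℝ)+1) :=
        hx.eventually_lt_const (by positivity)
      obtain ⟨m, hm⟩ := eventually_atTop.1 hev
      exact ⟨m, fun n hn => hm n hn⟩
    · intro hx
      rw [tendsto_order]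
      constructor
      · intro a ha
        filter_upwards [eventually_ge_atTop 0] with n _
        have : 0 ≤ vcount f C n x / n := div_nonneg (vcount_nonneg f C n x) (Nat.cast_nonneg n)
        linarith
      · intro a ha
        obtain ⟨k, hk⟩ := exists_nat_one_div_lt ha
        obtain ⟨m, hm⟩ := hx k
        filter_upwards [eventually_ge_atTop m] with n hn
        exact lt_trans (hm n hn) hk
  rw [this]
  exact MeasurableSet.iInter fun k => MeasurableSet.iUnion fun m =>
    MeasurableSet.iInter fun n => MeasurableSet.iInter fun _ =>
      measurableSet_lt ((vcount_measurable f C hf hC n).div_const _) measurable_const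

lemma mp_zpow (hf : Measurable f) (hf' : Measurable f.symm)
    {ν : Measure X} (hν : MeasurePreserving (⇑f) ν ν) (m : ℤ) :
    MeasurePreserving ⇑(f^m) ν ν := by
  have hsymm : MeasurePreserving (⇑f.symm) ν ν :=
    MeasurePreserving.symm (MeasurableEquiv.mk f hf hf') hν
  rcases zpow_coe_cases f m with h | h <;> rw [h]
  · exact hν.iterate _
  · exact hsymm.iterate _

lemma zeroSet_inter_C_null (hf : Measurable f) (hf' : Measurable f.symm)
    {ν : Measure X} [IsProbabilityMeasure ν] (hν : MeasurePreserving (⇑f) ν ν)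
    (hC : MeasurableSet C) : ν (zeroSet f C ∩ C) = 0 := by
  set E0 := zeroSet f C with hE0def
  have hE0m : MeasurableSet E0 := zeroSet_measurable f C hf hC
  set g0 : X → ℝ := C.indicator (fun _ => (1:ℝ)) with hg0def
  have hg0m : Measurable g0 := measurable_const.indicator hC
  -- each set-integral equals the measure of E0 ∩ C
  have hconstseq : ∀ n : ℕ, 1 ≤ n →
      ∫ x in E0, vcount f C n x / n ∂ν = (ν (E0 ∩ C)).toReal := by
    intro n hn
    have hterm : ∀ i : ℕ, ∫ x in E0, g0 ((⇑f)^[i] x) ∂ν = (ν (E0 ∩ C)).toReal := by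
      intro i
      have heq : (fun x => g0 ((⇑f)^[i] x)) = ((⇑f)^[i] ⁻¹' C).indicator (fun _ => (1:ℝ)) := by
        funext x
        rw [hg0def]
        by_cases hx : (⇑f)^[i] x ∈ C
        · rw [Set.indicator_of_mem hx,
            Set.indicator_of_mem (show x ∈ (⇑f)^[i] ⁻¹' C from hx)]
        · rw [Set.indicator_of_notMem hx,
            Set.indicator_of_notMem (show x ∉ (⇑f)^[i] ⁻¹' C from hx)]
      rw [heq, setIntegral_indicator ((hC.preimage (hf.iterate i)))]
      rw [setIntegral_const]
      have hiter : E0 ∩ (⇑f)^[i] ⁻¹' C = (⇑f)^[i] ⁻¹' (E0 ∩ C) := by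
        rw [Set.preimage_inter, zeroSet_iterate_invariant]
      rw [hiter, measureReal_def, (hν.iterate i).measure_preimage (hE0m.inter hC).nullMeasurableSet]
      simp
    have hint : ∀ i : ℕ, Integrable (fun x => g0 ((⇑f)^[i] x)) (ν.restrict E0) := by
      intro i
      apply bdd_integrable (hg0m.comp (hf.iterate i))
      intro x
      have h0 := vcount_term_nonneg C ((⇑f)^[i] x)
      have h1 := vcount_term_le_one C ((⇑f)^[i] x)
      have habs : |C.indicator (fun _ => (1:ℝ)) ((⇑f)^[i] x)| ≤ 1 := abs_le.2 ⟨by linarith, h1⟩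
      show |g0 ((⇑f)^[i] x)| ≤ 1
      rw [hg0def]
      exact habs
    have hsum : ∫ x in E0, vcount f C n x ∂ν = n * (ν (E0 ∩ C)).toReal := by
      have : ∫ x in E0, vcount f C n x ∂ν
          = ∑ i ∈ Finset.range n, ∫ x in E0, g0 ((⇑f)^[i] x) ∂ν := by
        rw [← integral_finset_sum _ (fun i _ => hint i)]
        rfl
      rw [this]
      rw [Finset.sum_congr rfl (fun i _ => hterm i)]
      simp [mul_comm]
    have hn' : ((n:ℝ)) ≠ 0 := by
      have : (0:ℝ) < n := by exact_mod_cast hn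
      exact ne_of_gt this
    calc ∫ x in E0, vcount f C n x / n ∂ν = (∫ x in E0, vcount f C n x ∂ν) / n :=
          integral_div _ _
      _ = (ν (E0 ∩ C)).toReal := by rw [hsum]; field_simp
  -- dominated convergence
  have hdom : Tendsto (fun n => ∫ x in E0, vcount f C n x / n ∂ν) atTop (nhds 0) := by
    have h0 : (0:ℝ) = ∫ _x in E0, (0:ℝ) ∂ν := by simp
    rw [h0]
    apply tendsto_integral_of_dominated_convergence (bound := fun _ => (1:ℝ))
    · intro n
      exact ((vcount_measurable f C hf hC n).div measurable_const).aestronglyMeasurable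
    · exact integrable_const 1
    · intro n
      refine Eventually.of_forall (fun x => ?_)
      rw [Real.norm_eq_abs]
      exact abs_vcount_div_le_one f C n x
    · rw [ae_restrict_iff' hE0m]
      exact Eventually.of_forall (fun x hx => hx)
  have hfinal : (ν (E0 ∩ C)).toReal = 0 := by
    have : Tendsto (fun _n : ℕ => (ν (E0 ∩ C)).toReal) atTop (nhds 0) := by
      apply hdom.congr'
      filter_upwards [eventually_ge_atTop 1] with n hn
      exact hconstseq n hn
    exact tendsto_nhds_unique tendsto_const_nhds this
  rcases (ENNReal.toReal_eq_zero_iff _).1 hfinal with h | h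
  · exact h
  · exact absurd h (measure_ne_top ν _)

lemma zeroSet_inter_union_null (hf : Measurable f) (hf' : Measurable f.symm)
    {ν : Measure X} [IsProbabilityMeasure ν] (hν : MeasurePreserving (⇑f) ν ν)
    (hC : MeasurableSet C) : ν (zeroSet f C ∩ ⋃ m : ℤ, ⇑(f^m) '' C) = 0 := by
  rw [Set.inter_iUnion]
  apply measure_iUnion_null
  intro m
  have himg : ⇑(f^m) '' C = ⇑(f^(-m)) ⁻¹' C := by
    rw [Equiv.image_eq_preimage_symm]
    congr 1
    rw [zpow_neg, ← Equiv.Perm.inv_def]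
  rw [himg]
  have : zeroSet f C ∩ ⇑(f^(-m)) ⁻¹' C = ⇑(f^(-m)) ⁻¹' (zeroSet f C ∩ C) := by
    rw [Set.preimage_inter, zeroSet_zpow_invariant]
  rw [this]
  rw [(mp_zpow f hf hf' hν (-m)).measure_preimage
    ((zeroSet_measurable f C hf hC).inter hC).nullMeasurableSet]
  exact zeroSet_inter_C_null f C hf hf' hν hC

-- ## Part 6 : deterministic consequence of convergence of visit frequencies

lemma conv_along (x : X) {L : ℝ}
    (hL : Tendsto (fun n : ℕ => vcount f C n x / n) atTop (nhds L))
    {m : ℕ → ℕ} {c : ℝ} (hc : 0 ≤ c)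
    (hlow : ∀ n : ℕ, c*n - 1 ≤ (m n : ℝ)) (hup : ∀ n : ℕ, (m n : ℝ) ≤ c*n + 1) :
    Tendsto (fun n : ℕ => vcount f C (m n) x / n) atTop (nhds (L*c)) := by
  rcases eq_or_lt_of_le hc with hc0 | hcpos
  · -- c = 0 : m n ≤ 1, squeeze
    rw [← hc0, mul_zero]
    apply squeeze_zero'
      (Eventually.of_forall (fun n => div_nonneg (vcount_nonneg f C _ x) (Nat.cast_nonneg n)))
      (g := fun n : ℕ => 1 / (n:ℝ)) ?_ tendsto_one_div_atTop_nhds_zero_nat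
    apply Eventually.of_forall
    intro n
    have h1 : (m n : ℝ) ≤ 1 := by have := hup n; rw [← hc0] at this; simpa using this
    have h2 : vcount f C (m n) x ≤ (m n : ℝ) := vcount_le f C (m n) x
    rcases Nat.eq_zero_or_pos n with rfl | hn
    · simp
    · have hn' : (0:ℝ) < n := by exact_mod_cast hn
      exact (div_le_div_iff_of_pos_right hn').2 (by linarith)
  · -- c > 0
    have hminf : Tendsto m atTop atTop := by
      rw [← tendsto_natCast_atTop_iff (R := ℝ)]
      apply tendsto_atTop_mono hlow
      apply tendsto_atTop_add_const_right
      exact Tendsto.const_mul_atTop hcpos tendsto_natCast_atTop_atTop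
    have hfac1 : Tendsto (fun n : ℕ => vcount f C (m n) x / (m n : ℝ)) atTop (nhds L) :=
      hL.comp hminf
    have hfac2 : Tendsto (fun n : ℕ => (m n : ℝ) / n) atTop (nhds c) := by
      have hlo : Tendsto (fun n : ℕ => c - 1/(n:ℝ)) atTop (nhds c) := by
        have := tendsto_const_nhds (x := c) (f := atTop (α := ℕ)) |>.sub
          tendsto_one_div_atTop_nhds_zero_nat
        simpa using this
      have hhi : Tendsto (fun n : ℕ => c + 1/(n:ℝ)) atTop (nhds c) := by
        have := tendsto_const_nhds (x := c) (f := atTop (α := ℕ)) |>.add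
          tendsto_one_div_atTop_nhds_zero_nat
        simpa using this
      apply tendsto_of_tendsto_of_tendsto_of_le_of_le' hlo hhi
      · filter_upwards [eventually_ge_atTop 1] with n hn
        have hn' : (0:ℝ) < n := by exact_mod_cast hn
        rw [le_div_iff₀ hn']
        have h := hlow n
        have he : (c - 1/(n:ℝ)) * n = c*n - 1 := by field_simp
        rw [he]
        exact h
      · filter_upwards [eventually_ge_atTop 1] with n hn
        have hn' : (0:ℝ) < n := by exact_mod_cast hn
        rw [div_le_iff₀ hn']
        have h := hup n
        have he : (c + 1/(n:ℝ)) * n = c*n + 1 := by field_simp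
        rw [he]
        exact h
    have hprod := hfac1.mul hfac2
    apply hprod.congr'
    have hm1 : ∀ᶠ n : ℕ in atTop, 1 ≤ m n := hminf.eventually_ge_atTop 1
    filter_upwards [eventually_ge_atTop 1, hm1] with n hn hmn
    have hn' : ((n:ℝ)) ≠ 0 := by
      have : (0:ℝ) < n := by exact_mod_cast hn
      exact ne_of_gt this
    have hm' : ((m n : ℝ)) ≠ 0 := by
      have : (0:ℝ) < (m n : ℝ) := by exact_mod_cast hmn
      exact ne_of_gt this
    field_simp

lemma window_eventually (x : X) {L : ℝ}
    (hL : Tendsto (fun n : ℕ => vcount f C n x / n) atTop (nhds L))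
    (hLpos : 0 < L) {K : ℕ} (hK : 0 < K) (j : ℕ) (hj : j < K) :
    ∀ᶠ n : ℕ in atTop, ∃ ℓ : ℕ,
      (j:ℝ)*n ≤ (K:ℝ)*ℓ ∧ (K:ℝ)*ℓ ≤ ((j:ℝ)+1)*n ∧ (⇑f)^[ℓ] x ∈ C := by
  have hK' : (0:ℝ) < K := by exact_mod_cast hK
  set m1 : ℕ → ℕ := fun n => ⌈(j:ℝ)*n/K⌉₊ with hm1def
  set m2 : ℕ → ℕ := fun n => ⌊((j:ℝ)+1)*n/K⌋₊ with hm2def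
  have hjn_nonneg : ∀ n : ℕ, 0 ≤ (j:ℝ)*n/K := fun n => by positivity
  have hj1n_nonneg : ∀ n : ℕ, 0 ≤ ((j:ℝ)+1)*n/K := fun n => by positivity
  have hconv1 : Tendsto (fun n : ℕ => vcount f C (m1 n) x / n) atTop
      (nhds (L*((j:ℝ)/K))) := by
    apply conv_along f C x hL (by positivity)
    · intro n
      have h := Nat.le_ceil ((j:ℝ)*n/K)
      have : (j:ℝ)/K*n = (j:ℝ)*n/K := by ring
      rw [this]
      linarith
    · intro n
      have h := Nat.ceil_lt_add_one (hjn_nonneg n)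
      have : (j:ℝ)/K*n = (j:ℝ)*n/K := by ring
      rw [this]
      linarith
  have hconv2 : Tendsto (fun n : ℕ => vcount f C (m2 n) x / n) atTop
      (nhds (L*(((j:ℝ)+1)/K))) := by
    apply conv_along f C x hL (by positivity)
    · intro n
      have h := Nat.lt_floor_add_one (((j:ℝ)+1)*n/K)
      have : ((j:ℝ)+1)/K*n = ((j:ℝ)+1)*n/K := by ring
      rw [this]
      linarith
    · intro n
      have h := Nat.floor_le (hj1n_nonneg n)
      have : ((j:ℝ)+1)/K*n = ((j:ℝ)+1)*n/K := by ring
      rw [this]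
      linarith
  have hdiff : Tendsto (fun n : ℕ => vcount f C (m2 n) x / n - vcount f C (m1 n) x / n)
      atTop (nhds (L/K)) := by
    have := hconv2.sub hconv1
    have heq : L*(((j:ℝ)+1)/K) - L*((j:ℝ)/K) = L/K := by ring
    rwa [heq] at this
  have hpos : ∀ᶠ n : ℕ in atTop,
      0 < vcount f C (m2 n) x / n - vcount f C (m1 n) x / n :=
    hdiff.eventually_const_lt (by positivity)
  filter_upwards [hpos, eventually_ge_atTop 1] with n hn hn1
  have hn' : (0:ℝ) < n := by exact_mod_cast hn1
  have hvlt : vcount f C (m1 n) x < vcount f C (m2 n) x := by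
    have h2 : vcount f C (m1 n) x / n < vcount f C (m2 n) x / n := by linarith
    exact (div_lt_div_iff_of_pos_right hn').1 h2
  have hm12 : m1 n ≤ m2 n := by
    by_contra hcon
    push_neg at hcon
    exact absurd (vcount_mono f C x (le_of_lt hcon)) (not_le.2 hvlt)
  -- the difference is a sum over Ico
  have hsum : vcount f C (m2 n) x - vcount f C (m1 n) x
      = ∑ i ∈ Finset.Ico (m1 n) (m2 n), C.indicator (fun _ => (1:ℝ)) ((⇑f)^[i] x) := by
    rw [Finset.sum_Ico_eq_sub _ hm12]
    unfold vcount birkS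
    rfl
  have hsumpos : (0:ℝ) < ∑ i ∈ Finset.Ico (m1 n) (m2 n),
      C.indicator (fun _ => (1:ℝ)) ((⇑f)^[i] x) := by
    rw [← hsum]
    linarith
  obtain ⟨i, hi, hine⟩ := Finset.exists_ne_zero_of_sum_ne_zero (ne_of_gt hsumpos)
  rw [Finset.mem_Ico] at hi
  have hivisit : (⇑f)^[i] x ∈ C := by
    by_contra hcon
    exact hine (Set.indicator_of_notMem hcon _)
  refine ⟨i, ?_, ?_, hivisit⟩
  · -- j*n ≤ K*i
    have h1 : (j:ℝ)*n/K ≤ m1 n := Nat.le_ceil _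
    have h2 : (m1 n : ℝ) ≤ i := by exact_mod_cast hi.1
    rw [div_le_iff₀ hK'] at h1
    nlinarith
  · -- K*i ≤ (j+1)*n
    have h1 : (m2 n : ℝ) ≤ ((j:ℝ)+1)*n/K := Nat.floor_le (hj1n_nonneg n)
    have h2 : (i:ℝ) < m2 n := by exact_mod_cast hi.2
    rw [le_div_iff₀ hK'] at h1
    nlinarith

lemma freq_window (x : X) {L γ : ℝ}
    (hL : Tendsto (fun n : ℕ => vcount f C n x / n) atTop (nhds L))
    (hLpos : 0 < L) (hγ : 0 < γ) :
    ∃ N : ℕ, ∀ n : ℕ, N ≤ n → ∀ t ∈ Set.Ioo (0:ℝ) 1,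
      ∃ ℓ : ℕ, ℓ ≤ n ∧ t - γ ≤ (ℓ:ℝ)/n ∧ (ℓ:ℝ)/n ≤ t + γ ∧ (⇑f)^[ℓ] x ∈ C := by
  set δ := min γ (1/2) with hδdef
  have hδpos : 0 < δ := lt_min hγ (by norm_num)
  have hδγ : δ ≤ γ := min_le_left _ _
  have hδhalf : δ ≤ 1/2 := min_le_right _ _
  set K := ⌈(2:ℝ)/δ⌉₊ with hKdef
  have hK2 : (2:ℝ)/δ ≤ K := Nat.le_ceil _
  have hK'pos : (0:ℝ) < K := lt_of_lt_of_le (by positivity) hK2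
  have hKpos : 0 < K := by exact_mod_cast hK'pos
  have hδK : 2 ≤ δ * (K:ℝ) := by
    rw [div_le_iff₀ hδpos] at hK2
    linarith [hK2, mul_comm δ (K:ℝ)]
  have hall : ∀ᶠ n : ℕ in atTop, 1 ≤ n ∧ ∀ j ∈ Finset.range K, ∃ ℓ : ℕ,
      (j:ℝ)*n ≤ (K:ℝ)*ℓ ∧ (K:ℝ)*ℓ ≤ ((j:ℝ)+1)*n ∧ (⇑f)^[ℓ] x ∈ C := by
    apply Eventually.and (eventually_ge_atTop 1)
    rw [eventually_all_finset]
    intro j hj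
    exact window_eventually f C x hL hLpos hKpos j (Finset.mem_range.1 hj)
  obtain ⟨N, hN⟩ := eventually_atTop.1 hall
  refine ⟨N, fun n hn t ht => ?_⟩
  obtain ⟨hn1, hwin⟩ := hN n hn
  obtain ⟨ht0, ht1⟩ := ht
  have hn' : (0:ℝ) < n := by exact_mod_cast hn1
  set c := min (max 0 (t-γ)) (1-δ) with hcdef
  have hc0 : 0 ≤ c := le_min (le_max_left _ _) (by linarith)
  have hc1 : c ≤ 1 - δ := min_le_right _ _
  have hctγ : t - γ ≤ c := le_min (le_max_right _ _) (by linarith)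
  set j := ⌈c*(K:ℝ)⌉₊ with hjdef
  have hjge : c*(K:ℝ) ≤ (j:ℝ) := Nat.le_ceil _
  have hjlt : ((j:ℕ):ℝ) < c*(K:ℝ) + 1 := Nat.ceil_lt_add_one (by positivity)
  have hjK : j < K := by
    have hckK : c*(K:ℝ) ≤ (1-δ)*(K:ℝ) := mul_le_mul_of_nonneg_right hc1 (le_of_lt hK'pos)
    have : (j:ℝ) < K := by nlinarith
    exact_mod_cast this
  obtain ⟨ℓ, hl1, hl2, hl3⟩ := hwin j (Finset.mem_range.2 hjK)
  have hj1K : ((j:ℝ)+1) ≤ (K:ℝ) := by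
    have := Nat.succ_le_of_lt hjK
    exact_mod_cast this
  have hlen : ℓ ≤ n := by
    have hln : (ℓ:ℝ) ≤ n := by nlinarith
    exact_mod_cast hln
  refine ⟨ℓ, hlen, ?_, ?_, hl3⟩
  · have h1 : (j:ℝ)/K ≤ (ℓ:ℝ)/n := by
      rw [div_le_div_iff₀ hK'pos hn']
      nlinarith
    have h2 : c ≤ (j:ℝ)/K := by rw [le_div_iff₀ hK'pos]; exact hjge
    linarith
  · have h1 : (ℓ:ℝ)/n ≤ ((j:ℝ)+1)/K := by
      rw [div_le_div_iff₀ hn' hK'pos]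
      nlinarith
    have h2 : ((j:ℝ)+1)/K ≤ c + δ := by
      rw [div_le_iff₀ hK'pos]
      nlinarith
    have h3 : c + δ ≤ t + γ := by
      rcases le_or_gt 0 (t-γ) with h | h
      · have hcle : c ≤ t - γ := (min_le_left _ _).trans (le_of_eq (max_eq_right h))
        linarith
      · have hcle : c ≤ 0 := (min_le_left _ _).trans (le_of_eq (max_eq_left (le_of_lt h)))
        linarith
    linarith

end Main

theorem recurrence_with_prescribed_frequency
    {X : Type*} [MeasurableSpace X] (μ : Measure X) [IsProbabilityMeasure μ]
    (f : X ≃ X) (hf : Measurable f) (hf' : Measurable f.symm)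
    (hμ : MeasurePreserving f μ μ)
    (C : Set X) (hC : MeasurableSet C) (hCpos : 0 < μ C)
    (γ : ℝ) (hγ : 0 < γ) :
    ∀ᵐ x ∂μ, x ∈ (⋃ n : ℤ, ⇑(f ^ n) '' C) →
      ∃ N : ℕ, ∀ n : ℕ, N ≤ n → ∀ t ∈ Set.Ioo (0 : ℝ) 1,
        ∃ ℓ : ℕ, ℓ ≤ n ∧ t - γ ≤ (ℓ : ℝ) / (n : ℝ) ∧ (ℓ : ℝ) / (n : ℝ) ≤ t + γ ∧
          (⇑f)^[ℓ] x ∈ C := by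
  set B : Set X := ⋃ (pq : ℚ × ℚ), ⋃ (_ : 0 < ((pq.1:ℝ)) ∧ ((pq.2:ℝ)) ≤ 1 ∧ ((pq.1:ℝ)) < ((pq.2:ℝ))),
    {x | (∃ᶠ n in Filter.atTop, vcount f C n x < (pq.1:ℝ) * n) ∧
         (∃ᶠ n in Filter.atTop, (pq.2:ℝ) * n < vcount f C n x)} with hBdef
  have hB : μ B = 0 := by
    apply measure_iUnion_null
    intro pq
    apply measure_iUnion_null
    intro hcond
    exact Epq_null f C hf hf' hμ hC hcond.1 hcond.2.1 hcond.2.2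
  have hB2 : μ (zeroSet f C ∩ ⋃ m : ℤ, ⇑(f^m) '' C) = 0 :=
    zeroSet_inter_union_null f C hf hf' hμ hC
  have hae1 : ∀ᵐ x ∂μ, x ∉ B := by
    rw [ae_iff]
    simpa using hB
  have hae2 : ∀ᵐ x ∂μ, x ∉ zeroSet f C ∩ ⋃ m : ℤ, ⇑(f^m) '' C := by
    rw [ae_iff]
    simpa only [not_not, Set.setOf_mem_eq] using hB2
  filter_upwards [hae1, hae2] with x hx1 hx2 hxΓ
  -- boundedness of frequencies
  set u : ℕ → ℝ := fun n => vcount f C n x / n with hudef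
  have hu0 : ∀ n, 0 ≤ u n := fun n => div_nonneg (vcount_nonneg f C n x) (Nat.cast_nonneg n)
  have hu1 : ∀ n, u n ≤ 1 := by
    intro n
    rcases Nat.eq_zero_or_pos n with rfl | hn
    · simp [hudef, vcount, birkS]
    · have hn' : (0:ℝ) < n := by exact_mod_cast hn
      rw [hudef]
      rw [div_le_one hn']
      exact vcount_le f C n x
  have hbddA : Filter.IsBoundedUnder (· ≤ ·) Filter.atTop u := isBoundedUnder_of ⟨1, hu1⟩
  have hbddB : Filter.IsBoundedUnder (· ≥ ·) Filter.atTop u := isBoundedUnder_of ⟨0, hu0⟩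
  have hcoA := hbddA.isCoboundedUnder_ge
  have hcoB := hbddB.isCoboundedUnder_le
  have hliminf0 : 0 ≤ Filter.liminf u Filter.atTop :=
    Filter.le_liminf_of_le hcoA (Filter.Eventually.of_forall hu0)
  have hlimsup1 : Filter.limsup u Filter.atTop ≤ 1 :=
    Filter.limsup_le_of_le hcoB (Filter.Eventually.of_forall hu1)
  have hle : Filter.liminf u Filter.atTop ≤ Filter.limsup u Filter.atTop :=
    Filter.liminf_le_limsup hbddA hbddB
  have heq : Filter.liminf u Filter.atTop = Filter.limsup u Filter.atTop := by
    by_contra hne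
    have hlt : Filter.liminf u Filter.atTop < Filter.limsup u Filter.atTop :=
      lt_of_le_of_ne hle hne
    obtain ⟨p, hp1, hp2⟩ := exists_rat_btwn hlt
    obtain ⟨q, hq1, hq2⟩ := exists_rat_btwn hp2
    have hfreq1 : ∃ᶠ n in Filter.atTop, u n < (p:ℝ) :=
      Filter.frequently_lt_of_liminf_lt hcoA hp1
    have hfreq2 : ∃ᶠ n in Filter.atTop, (q:ℝ) < u n :=
      Filter.frequently_lt_of_lt_limsup hcoB hq2
    apply hx1
    rw [hBdef]
    refine Set.mem_iUnion.2 ⟨(p, q), Set.mem_iUnion.2 ⟨?_, ?_, ?_⟩⟩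
    · exact ⟨lt_of_le_of_lt hliminf0 hp1, le_trans (le_of_lt hq2) hlimsup1, by exact_mod_cast hq1⟩
    · -- frequently below p
      have : ∀ᶠ n in Filter.atTop, (u n < (p:ℝ) → vcount f C n x < (p:ℝ) * n) := by
        filter_upwards [Filter.eventually_ge_atTop 1] with n hn h
        have hn' : (0:ℝ) < n := by exact_mod_cast hn
        rw [hudef] at h
        calc vcount f C n x = vcount f C n x / n * n := by field_simp
          _ < (p:ℝ) * n := by
            apply mul_lt_mul_of_pos_right _ hn'
            exact h
      exact (hfreq1.and_eventually this).mono (fun n hn => hn.2 hn.1)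
    · have : ∀ᶠ n in Filter.atTop, ((q:ℝ) < u n → (q:ℝ) * n < vcount f C n x) := by
        filter_upwards [Filter.eventually_ge_atTop 1] with n hn h
        have hn' : (0:ℝ) < n := by exact_mod_cast hn
        rw [hudef] at h
        calc (q:ℝ) * n < vcount f C n x / n * n := by
              apply mul_lt_mul_of_pos_right _ hn'
              exact h
          _ = vcount f C n x := by field_simp
      exact (hfreq2.and_eventually this).mono (fun n hn => hn.2 hn.1)
  set L := Filter.limsup u Filter.atTop with hLdef
  have hconv : Filter.Tendsto u Filter.atTop (nhds L) :=
    tendsto_of_liminf_eq_limsup heq rfl hbddA hbddB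
  have hL0 : 0 ≤ L := heq ▸ hliminf0
  have hLpos : 0 < L := by
    rcases lt_or_eq_of_le hL0 with h | h
    · exact h
    · exfalso
      apply hx2
      refine ⟨?_, hxΓ⟩
      show Filter.Tendsto (fun n : ℕ => vcount f C n x / n) Filter.atTop (nhds 0)
      rw [h]
      exact hconv
  exact freq_window f C x hconv hLpos hγ
end

section
/- Let V be a d-dimensional real vector space, let 1 ≤ p ≤ d, and let e = (e₁,…,e_d) and e' = (e'₁,…,e'_d) be two bases of V. Let E = span(e₁,…,e_p) and F' = span(e'_{p+1},…,e'_d). Let L : V → V be a linear map such that L(v₀) ∈ F' for some nonzero vector v₀ ∈ E. Then the induced linear map ⋀^p L on the p-th exterior power ⋀^p V sends the vector e₁ ∧ ⋯ ∧ e_p into the subspace H' of ⋀^p V spanned by the wedges e'_{i₁} ∧ ⋯ ∧ e'_{i_p} over all strictly increasing index tuples 1 ≤ i₁ < ⋯ < i_p ≤ d with i_p > p (i.e., all basis wedges of e' different from e'₁ ∧ ⋯ ∧ e'_p). -/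
open ExteriorAlgebra

private lemma aux_sorted_mem {V : Type*} [AddCommGroup V] [Module ℝ V] (d p : ℕ)
    (e' : Module.Basis (Fin d) ℝ V) (r : Fin p → Fin d) (j₀ : Fin p) (hj₀ : p ≤ (r j₀ : ℕ)) :
    ExteriorAlgebra.ιMulti ℝ p (fun i => e' (r i))
      ∈ Submodule.span ℝ
          {w : ExteriorAlgebra ℝ V |
            ∃ ι : Fin p → Fin d, StrictMono ι ∧ (∃ j : Fin p, p ≤ ((ι j : Fin d) : ℕ)) ∧
              w = ExteriorAlgebra.ιMulti ℝ p (fun j => e' (ι j))} := by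
  classical
  by_cases hinj : Function.Injective r
  · -- sort r
    set s : Finset (Fin d) := Finset.univ.image r with hs
    have hcard : s.card = p := by
      rw [hs, Finset.card_image_of_injective _ hinj, Finset.card_univ, Fintype.card_fin]
    set g : Fin p → Fin d := ⇑(s.orderEmbOfFin hcard) with hg
    have hmem : ∀ i, r i ∈ s := fun i => Finset.mem_image_of_mem r (Finset.mem_univ i)
    set σ' : Fin p → Fin p := fun i => (s.orderIsoOfFin hcard).symm ⟨r i, hmem i⟩ with hσ'
    have hσinj : Function.Injective σ' := by
      intro a b hab
      apply hinj
      have := congrArg (fun x => ((s.orderIsoOfFin hcard) x : Fin d)) hab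
      simpa [hσ'] using this
    have hσbij : Function.Bijective σ' := (Finite.injective_iff_bijective).1 hσinj
    set σ : Equiv.Perm (Fin p) := Equiv.ofBijective σ' hσbij with hσ
    have hfact : ∀ i, g (σ i) = r i := by
      intro i
      simp only [hσ, Equiv.ofBijective_apply, hσ', hg]
      rw [← Finset.coe_orderIsoOfFin_apply]
      simp
    have hcomp : (fun i => e' (r i)) = (fun i => e' (g i)) ∘ σ := by
      funext i
      simp [Function.comp, hfact i]
    rw [hcomp]
    rw [AlternatingMap.map_perm]
    have hmemspan : ExteriorAlgebra.ιMulti ℝ p (fun i => e' (g i))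
        ∈ Submodule.span ℝ
          {w : ExteriorAlgebra ℝ V |
            ∃ ι : Fin p → Fin d, StrictMono ι ∧ (∃ j : Fin p, p ≤ ((ι j : Fin d) : ℕ)) ∧
              w = ExteriorAlgebra.ιMulti ℝ p (fun j => e' (ι j))} := by
      apply Submodule.subset_span
      refine ⟨g, (s.orderEmbOfFin hcard).strictMono, ⟨σ j₀, ?_⟩, rfl⟩
      rw [hfact j₀]; exact hj₀
    obtain h1 | h1 := Int.units_eq_one_or (Equiv.Perm.sign σ)
    · rw [h1, one_smul]; exact hmemspan
    · rw [h1]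
      have : (-1 : ℤˣ) • ExteriorAlgebra.ιMulti ℝ p (fun i => e' (g i))
          = -ExteriorAlgebra.ιMulti ℝ p (fun i => e' (g i)) := by
        simp
      rw [this]
      exact Submodule.neg_mem _ hmemspan
  · -- not injective: the wedge is zero
    rw [Function.not_injective_iff] at hinj
    obtain ⟨a, b, hab, hne⟩ := hinj
    rw [AlternatingMap.map_eq_zero_of_eq _ _ (by rw [hab]) hne]
    exact Submodule.zero_mem _

private lemma aux_slot_mem {V : Type*} [AddCommGroup V] [Module ℝ V] (d p : ℕ)
    (e' : Module.Basis (Fin d) ℝ V) (v : Fin p → V) (j₀ : Fin p)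
    (hv : v j₀ ∈ Submodule.span ℝ (e' '' {i : Fin d | p ≤ (i : ℕ)})) :
    ExteriorAlgebra.ιMulti ℝ p v
      ∈ Submodule.span ℝ
          {w : ExteriorAlgebra ℝ V |
            ∃ ι : Fin p → Fin d, StrictMono ι ∧ (∃ j : Fin p, p ≤ ((ι j : Fin d) : ℕ)) ∧
              w = ExteriorAlgebra.ιMulti ℝ p (fun j => e' (ι j))} := by
  classical
  have hrepr : ∀ i, v i = ∑ k, e'.repr (v i) k • e' k := fun i => (e'.sum_repr (v i)).symm
  have hexp : ExteriorAlgebra.ιMulti ℝ p v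
      = ∑ r : Fin p → Fin d, (∏ i, e'.repr (v i) (r i)) •
          ExteriorAlgebra.ιMulti ℝ p (fun i => e' (r i)) := by
    conv_lhs => rw [show v = fun i => ∑ k, e'.repr (v i) k • e' k from funext hrepr]
    rw [show (ExteriorAlgebra.ιMulti ℝ p (M := V)) (fun i => ∑ k, e'.repr (v i) k • e' k)
        = (ExteriorAlgebra.ιMulti ℝ p (M := V)).toMultilinearMap
          (fun i => ∑ k, e'.repr (v i) k • e' k) from rfl]
    rw [MultilinearMap.map_sum]
    congr 1
    funext r
    exact MultilinearMap.map_smul_univ _ _ _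
  rw [hexp]
  apply Submodule.sum_mem
  intro r _
  by_cases hr : p ≤ (r j₀ : ℕ)
  · exact Submodule.smul_mem _ _ (aux_sorted_mem d p e' r j₀ hr)
  · have hsupp := (Module.Basis.mem_span_image e').1 hv
    have : e'.repr (v j₀) (r j₀) = 0 := by
      by_contra h
      exact hr (hsupp (Finsupp.mem_support_iff.2 h))
    rw [show (∏ i, e'.repr (v i) (r i)) = 0 from
      Finset.prod_eq_zero (Finset.mem_univ j₀) this, zero_smul]
    exact Submodule.zero_mem _

theorem exteriorPower_map_wedge_mem_span
    {V : Type*} [AddCommGroup V] [Module ℝ V] (d p : ℕ) (hp : 1 ≤ p) (hpd : p ≤ d)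
    (e e' : Module.Basis (Fin d) ℝ V) (L : V →ₗ[ℝ] V)
    (v₀ : V) (hv₀ : v₀ ≠ 0)
    (hv₀E : v₀ ∈ Submodule.span ℝ (e '' {i : Fin d | (i : ℕ) < p}))
    (hLv₀ : L v₀ ∈ Submodule.span ℝ (e' '' {i : Fin d | p ≤ (i : ℕ)})) :
    ExteriorAlgebra.map L
        (ExteriorAlgebra.ιMulti ℝ p (fun j : Fin p => e (Fin.castLE hpd j)))
      ∈ Submodule.span ℝ
          {w : ExteriorAlgebra ℝ V |
            ∃ ι : Fin p → Fin d, StrictMono ι ∧ (∃ j : Fin p, p ≤ ((ι j : Fin d) : ℕ)) ∧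
              w = ExteriorAlgebra.ιMulti ℝ p (fun j => e' (ι j))} := by
  classical
  set c := e.repr v₀ with hc
  have hsupp := (Module.Basis.mem_span_image e).1 hv₀E
  have hcne : c ≠ 0 := fun h => hv₀ (by
    have := e.sum_repr v₀
    rw [← hc] at this
    rw [← this, h]
    simp)
  obtain ⟨j, hj⟩ : ∃ j, c j ≠ 0 := by
    by_contra h
    push_neg at h
    exact hcne (Finsupp.ext h)
  have hjp : (j : ℕ) < p := hsupp (Finsupp.mem_support_iff.2 hj)
  set j' : Fin p := ⟨j, hjp⟩ with hj'
  have hcast : Fin.castLE hpd j' = j := by ext; simp [hj']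
  set base : Fin p → V := fun i => e (Fin.castLE hpd i) with hbase
  set u : Fin p → V := Function.update base j' v₀ with hu
  -- ιMulti u = c j • ιMulti base
  have hkey : ExteriorAlgebra.ιMulti ℝ p u = c j • ExteriorAlgebra.ιMulti ℝ p base := by
    have hv₀eq : v₀ = ∑ k, c k • e k := (e.sum_repr v₀).symm
    rw [hu, hv₀eq, AlternatingMap.map_update_sum]
    rw [Finset.sum_eq_single j]
    · rw [AlternatingMap.map_update_smul]
      congr 1
      have hb : e j = base j' := by rw [← hcast]
      rw [hb, Function.update_eq_self]
    · intro k _ hkj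
      by_cases hkp : (k : ℕ) < p
      · -- repeated entry: e k occurs at slot ⟨k, hkp⟩ and slot j'
        rw [AlternatingMap.map_update_smul]
        have hkj' : (⟨(k : ℕ), hkp⟩ : Fin p) ≠ j' := by
          intro h
          have hval := congrArg Fin.val h
          exact hkj (Fin.ext hval)
        have heq : Function.update base j' (e k) ⟨(k : ℕ), hkp⟩
            = Function.update base j' (e k) j' := by
          rw [Function.update_of_ne hkj', Function.update_self]
          exact congrArg e (Fin.ext rfl)
        rw [AlternatingMap.map_eq_zero_of_eq _ _ heq hkj', smul_zero]
      · have : c k = 0 := by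
          by_contra h
          exact hkp (Nat.lt_of_lt_of_le (hsupp (Finsupp.mem_support_iff.2 h)) le_rfl)
        rw [this, zero_smul, AlternatingMap.map_update_zero]
    · intro h
      exact absurd (Finset.mem_univ j) h
  have hLu : ExteriorAlgebra.map L (ExteriorAlgebra.ιMulti ℝ p base)
      = (c j)⁻¹ • ExteriorAlgebra.ιMulti ℝ p (L ∘ u) := by
    rw [← ExteriorAlgebra.map_apply_ιMulti]
    rw [show ExteriorAlgebra.ιMulti ℝ p u = c j • ExteriorAlgebra.ιMulti ℝ p base from hkey]
    rw [map_smul, smul_smul, inv_mul_cancel₀ hj, one_smul]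
  rw [hLu]
  apply Submodule.smul_mem
  apply aux_slot_mem d p e' (L ∘ u) j'
  have : (L ∘ u) j' = L v₀ := by simp [hu]
  rw [this]
  exact hLv₀
end

section
/- Let X be a compact metric space, f : X → X a homeomorphism, and A : X → M_d(ℝ) a continuous map into the d×d real matrices. Let x ∈ X be a nonperiodic point of f (f^k(x) ≠ x for all k ≥ 1), let n ≥ 1 be an integer, let ε ∈ (0,1), and let L₀,…,L_{n−1} ∈ M_d(ℝ) satisfy ‖L_i − A(f^i(x))‖ < ε/2 for each 0 ≤ i ≤ n−1. Then there exists an open set U containing x, with f^i(U) (0 ≤ i ≤ n−1) pairwise disjoint, such that for every open set V ⊆ U and every compact set K ⊆ V there exists a continuous map B : X → M_d(ℝ) satisfying: (1) ‖A(y) − B(y)‖ < ε for every y ∈ X; (2) B(y) = L_i for every y ∈ f^i(K) and every 0 ≤ i ≤ n−1; (3) B(y) = A(y) for every y ∈ X ∖ ⋃_{i=0}^{n−1} f^i(V). -/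
open Function

private lemma isOpenMap_iterate' {X : Type*} [TopologicalSpace X] {f : X → X}
    (h : IsOpenMap f) (n : ℕ) : IsOpenMap f^[n] := by
  induction n with
  | zero => simpa using IsOpenMap.id
  | succ k ih => rw [Function.iterate_succ']; exact h.comp ih

set_option synthInstance.maxHeartbeats 1000000 in
set_option maxHeartbeats 1000000 in
theorem exists_glued_perturbation
    {X : Type*} [MetricSpace X] [CompactSpace X] (d : ℕ) (f : X ≃ₜ X)
    (A : X → (EuclideanSpace ℝ (Fin d) →L[ℝ] EuclideanSpace ℝ (Fin d)))
    (hA : Continuous A)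
    (x : X) (hx : ∀ k : ℕ, 1 ≤ k → (⇑f)^[k] x ≠ x)
    (n : ℕ) (hn : 1 ≤ n) (ε : ℝ) (hε : ε ∈ Set.Ioo (0 : ℝ) 1)
    (L : ℕ → (EuclideanSpace ℝ (Fin d) →L[ℝ] EuclideanSpace ℝ (Fin d)))
    (hL : ∀ i < n, ‖L i - A ((⇑f)^[i] x)‖ < ε / 2) :
    ∃ U : Set X, IsOpen U ∧ x ∈ U ∧
      (∀ i j : ℕ, i < n → j < n → i ≠ j →
        Disjoint ((⇑f)^[i] '' U) ((⇑f)^[j] '' U)) ∧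
      ∀ V : Set X, IsOpen V → V ⊆ U → ∀ K : Set X, IsCompact K → K ⊆ V →
        ∃ B : X → (EuclideanSpace ℝ (Fin d) →L[ℝ] EuclideanSpace ℝ (Fin d)),
          Continuous B ∧
          (∀ y : X, ‖A y - B y‖ < ε) ∧
          (∀ i < n, ∀ y ∈ (⇑f)^[i] '' K, B y = L i) ∧
          (∀ y : X, y ∉ (⋃ i ∈ Finset.range n, (⇑f)^[i] '' V) → B y = A y) := by
  classical
  obtain ⟨hε0, hε1⟩ := hε
  set p : ℕ → X := fun i => (⇑f)^[i] x with hp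
  -- the points p 0, ..., p (n-1) are pairwise distinct
  have hpinj : ∀ i j, i < n → j < n → i ≠ j → p i ≠ p j := by
    have key : ∀ i j, i < j → p i ≠ p j := by
      intro i j hij hEq
      have h1 : (⇑f)^[i] ((⇑f)^[j - i] x) = (⇑f)^[i] x := by
        rw [← Function.iterate_add_apply]
        have : i + (j - i) = j := by omega
        rw [this]; exact hEq.symm
      exact hx (j - i) (by omega) ((f.injective.iterate i) h1)
    intro i j _ _ hij
    rcases lt_or_gt_of_ne hij with h | h
    · exact key i j h
    · exact fun hEq => (key j i h) hEq.symm
  -- choose a separation radius r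
  have hr : ∃ r : ℝ, 0 < r ∧ ∀ i < n, ∀ j < n, i ≠ j → 3 * r ≤ dist (p i) (p j) := by
    set D : Finset (ℕ × ℕ) :=
      (Finset.range n ×ˢ Finset.range n).filter (fun q => q.1 ≠ q.2) with hD
    by_cases hDne : D.Nonempty
    · refine ⟨(D.inf' hDne fun q => dist (p q.1) (p q.2)) / 3, ?_, ?_⟩
      · have hpos : ∀ q ∈ D, 0 < dist (p q.1) (p q.2) := by
          intro q hq
          simp only [hD, Finset.mem_filter, Finset.mem_product, Finset.mem_range] at hq
          exact dist_pos.2 (hpinj _ _ hq.1.1 hq.1.2 hq.2)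
        have := (Finset.lt_inf'_iff hDne).2 hpos
        linarith
      · intro i hi j hj hij
        have hm : (i, j) ∈ D := by
          simp [hD, Finset.mem_filter, Finset.mem_product, hi, hj, hij]
        have := Finset.inf'_le (fun q => dist (p q.1) (p q.2)) hm
        linarith
    · refine ⟨1, one_pos, fun i hi j hj hij => absurd ?_ hDne⟩
      exact ⟨(i, j), by simp [hD, Finset.mem_filter, Finset.mem_product, hi, hj, hij]⟩
  obtain ⟨r, hr0, hr3⟩ := hr
  -- the tower base U
  set W : ℕ → Set X := fun i => Metric.ball (p i) r ∩ {y | ‖A y - A (p i)‖ < ε / 2} with hW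
  have hWopen : ∀ i, IsOpen (W i) := by
    intro i
    exact Metric.isOpen_ball.inter
      (isOpen_lt ((hA.sub continuous_const).norm) continuous_const)
  set U : Set X := ⋂ i ∈ Finset.range n, (⇑f)^[i] ⁻¹' (W i) with hU
  have hUopen : IsOpen U :=
    isOpen_biInter_finset fun i _ => (hWopen i).preimage (f.continuous.iterate i)
  have hxU : x ∈ U := by
    simp only [hU, Set.mem_iInter, Set.mem_preimage]
    intro i _
    refine ⟨Metric.mem_ball_self hr0, ?_⟩
    show ‖A ((⇑f)^[i] x) - A (p i)‖ < ε / 2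
    simp only [hp, sub_self, norm_zero]
    linarith
  have hUsub : ∀ i < n, (⇑f)^[i] '' U ⊆ W i := by
    intro i hi
    rw [Set.image_subset_iff]
    exact Set.biInter_subset_of_mem (Finset.mem_range.mpr hi)
  have hdisj : ∀ i j : ℕ, i < n → j < n → i ≠ j →
      Disjoint ((⇑f)^[i] '' U) ((⇑f)^[j] '' U) := by
    intro i j hi hj hij
    rw [Set.disjoint_left]
    intro z hzi hzj
    have h1 : dist z (p i) < r := ((hUsub i hi) hzi).1
    have h2 : dist z (p j) < r := ((hUsub j hj) hzj).1
    have h3 := hr3 i hi j hj hij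
    have := dist_triangle (p i) z (p j)
    rw [dist_comm (p i) z] at this
    linarith
  refine ⟨U, hUopen, hxU, hdisj, ?_⟩
  intro V hV hVU K hK hKV
  -- Urysohn functions on each floor of the tower
  have hφex : ∀ i : ℕ, ∃ g : C(X, ℝ),
      Set.EqOn g 0 (((⇑f)^[i] '' V)ᶜ) ∧ Set.EqOn g 1 ((⇑f)^[i] '' K) ∧
      ∀ y, g y ∈ Set.Icc (0 : ℝ) 1 := by
    intro i
    refine exists_continuous_zero_one_of_isClosed
      ((isOpenMap_iterate' f.isOpenMap i V hV).isClosed_compl)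
      ((hK.image (f.continuous.iterate i)).isClosed) ?_
    exact disjoint_compl_left.mono_right (Set.image_mono hKV)
  choose φ hφ0 hφ1 hφ01 using hφex
  set B : X → (EuclideanSpace ℝ (Fin d) →L[ℝ] EuclideanSpace ℝ (Fin d)) :=
    fun y => A y + ∑ i ∈ Finset.range n, φ i y • (L i - A y) with hB
  have hBcont : Continuous B := by
    refine hA.add (continuous_finset_sum _ fun i _ => ?_)
    exact ((φ i).continuous).smul (continuous_const.sub hA)
  -- at most one floor contains y
  have hnot : ∀ y : X, ∀ i < n, y ∈ (⇑f)^[i] '' V → ∀ j < n, j ≠ i → φ j y = 0 := by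
    intro y i hi hyi j hj hji
    apply hφ0 j
    intro hyj
    have hd := hdisj i j hi hj hji.symm
    exact (Set.disjoint_left.1 hd) (Set.image_mono hVU hyi)
      (Set.image_mono hVU hyj)
  -- effect of membership in f^[i] '' V on A
  have hAclose : ∀ i < n, ∀ y ∈ (⇑f)^[i] '' V, ‖A y - A (p i)‖ < ε / 2 := by
    intro i hi y hy
    exact ((hUsub i hi) (Set.image_mono hVU hy)).2
  refine ⟨B, hBcont, ?_, ?_, ?_⟩
  · -- norm estimate
    intro y
    by_cases hy : ∃ i, i < n ∧ y ∈ (⇑f)^[i] '' V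
    · obtain ⟨i, hi, hyi⟩ := hy
      have hsum : ∑ j ∈ Finset.range n, φ j y • (L j - A y) = φ i y • (L i - A y) := by
        refine Finset.sum_eq_single_of_mem i (Finset.mem_range.2 hi) ?_
        intro j hj hne
        rw [hnot y i hi hyi j (Finset.mem_range.1 hj) hne]; exact zero_smul ℝ (L j - A y)
      have hre : A y - B y = -(φ i y • (L i - A y)) := by
        simp only [hB, hsum]; abel
      have hφle : |φ i y| ≤ 1 := by
        have := hφ01 i y
        rw [abs_le]; constructor <;> [linarith [this.1]; exact this.2]
      have hLy : ‖L i - A y‖ < ε := by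
        have h1 := hL i hi
        have h2 := hAclose i hi y hyi
        have := norm_sub_le_norm_sub_add_norm_sub (L i) (A (p i)) (A y)
        rw [norm_sub_rev (A (p i)) (A y)] at this
        change ‖L i - A (p i)‖ < ε / 2 at h1
        linarith
      calc ‖A y - B y‖ = ‖φ i y • (L i - A y)‖ := by rw [hre, norm_neg]
        _ = |φ i y| * ‖L i - A y‖ := by rw [← Real.norm_eq_abs]; exact norm_smul (φ i y) (L i - A y)
        _ ≤ 1 * ‖L i - A y‖ := mul_le_mul_of_nonneg_right hφle (norm_nonneg _)
        _ < ε := by rw [one_mul]; exact hLy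
    · push_neg at hy
      have hsum : ∑ j ∈ Finset.range n, φ j y • (L j - A y) = 0 := by
        refine Finset.sum_eq_zero fun j hj => ?_
        rw [show (φ j) y = 0 from hφ0 j (hy j (Finset.mem_range.1 hj))]; exact zero_smul ℝ (L j - A y)
      simp only [hB, hsum, add_zero, sub_self, norm_zero]
      exact hε0
  · -- B = L i on f^[i] '' K
    intro i hi y hy
    have hyV : y ∈ (⇑f)^[i] '' V := Set.image_mono hKV hy
    have hsum : ∑ j ∈ Finset.range n, φ j y • (L j - A y) = φ i y • (L i - A y) := by
      refine Finset.sum_eq_single_of_mem i (Finset.mem_range.2 hi) ?_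
      intro j hj hne
      rw [hnot y i hi hyV j (Finset.mem_range.1 hj) hne]; exact zero_smul ℝ (L j - A y)
    have h1 : φ i y = 1 := hφ1 i hy
    simp only [hB, hsum, h1, one_smul]
    abel
  · -- B = A outside the tower
    intro y hy
    have hsum : ∑ j ∈ Finset.range n, φ j y • (L j - A y) = 0 := by
      refine Finset.sum_eq_zero fun j hj => ?_
      have : y ∉ (⇑f)^[j] '' V := fun h => hy (Set.mem_biUnion hj h)
      rw [show (φ j) y = 0 from hφ0 j this]; exact zero_smul ℝ (L j - A y)
    simp [hB, hsum]
end
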